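/- arXiv:2007.14105 — 7 statements merged into one kernel-verified Lean document; each statement's English description precedes it below -/
import Mathlib

section
/- Let n, r ≥ 1 and let D^n ⊂ ℂ^n denote the open unit polydisc. Let L : D^n × D^n → GL(r,ℂ) be a map whose entries are holomorphic in both variables jointly, let G, H : D^n → D^n be holomorphic maps, and let J, J' : D^n → GL(r,ℂ) be holomorphic maps such that L(z,w) = J(z) · L(G(z), H(w)) · J'(w) for all z, w ∈ D^n. For 1 ≤ i, j ≤ n define 𝒦^{ij}(z,w) := ∂_{z_i}( L(z,w)^{-1} · ∂_{w_j} L(z,w) ) ∈ M_r(ℂ), and let 𝒦(z,w) ∈ M_{nr}(ℂ) be the n×n block matrix whose (i,j) block is 𝒦^{ij}(z,w). Then for all z, w ∈ D^n, 𝒦(z,w) = ( DG(z)^T ⊗ J'(w)^{-1} ) · 𝒦(G(z), H(w)) · ( DH(w) ⊗ J'(w) ), where DG(z) = (∂_{z_j} G_i(z))_{i,j} and DH(w) = (∂_{w_j} H_i(w))_{i,j} are the complex Jacobian matrices and ⊗ denotes the Kronecker product of matrices. -/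
open Matrix
open scoped Kronecker

/-- The open unit polydisc in `ℂⁿ`. -/
def polydisc (n : ℕ) : Set (Fin n → ℂ) := {z | ∀ i, ‖z i‖ < 1}

/-- Entrywise complex partial derivative of a matrix-valued function of two vector variables,
in the `i`-th coordinate of the first variable. -/
noncomputable def pd1 {n r : ℕ}
    (F : (Fin n → ℂ) → (Fin n → ℂ) → Matrix (Fin r) (Fin r) ℂ) (i : Fin n) :
    (Fin n → ℂ) → (Fin n → ℂ) → Matrix (Fin r) (Fin r) ℂ :=
  fun z w => Matrix.of fun a b => fderiv ℂ (fun z' => F z' w a b) z (Pi.single i 1)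

/-- Entrywise complex partial derivative in the `j`-th coordinate of the second variable. -/
noncomputable def pd2 {n r : ℕ}
    (F : (Fin n → ℂ) → (Fin n → ℂ) → Matrix (Fin r) (Fin r) ℂ) (j : Fin n) :
    (Fin n → ℂ) → (Fin n → ℂ) → Matrix (Fin r) (Fin r) ℂ :=
  fun z w => Matrix.of fun a b => fderiv ℂ (fun w' => F z w' a b) w (Pi.single j 1)

/-- The complex Jacobian matrix `(∂_{z_j} G_i(z))_{i,j}` of a holomorphic map `G : ℂⁿ → ℂⁿ`. -/
noncomputable def jacobianMat {n : ℕ} (G : (Fin n → ℂ) → (Fin n → ℂ)) (z : Fin n → ℂ) :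
    Matrix (Fin n) (Fin n) ℂ :=
  Matrix.of fun i j => fderiv ℂ (fun z' => G z' i) z (Pi.single j 1)

/-- The `nr × nr` block curvature matrix `𝒦(z,w)` whose `(i,j)` block is
`𝒦^{ij}(z,w) = ∂_{z_i}( L(z,w)⁻¹ · ∂_{w_j} L(z,w) )`. -/
noncomputable def curvMat {n r : ℕ}
    (L : (Fin n → ℂ) → (Fin n → ℂ) → Matrix (Fin r) (Fin r) ℂ)
    (z w : Fin n → ℂ) : Matrix (Fin n × Fin r) (Fin n × Fin r) ℂ :=
  Matrix.of fun p q =>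
    pd1 (fun z' w' => (L z' w')⁻¹ * pd2 L q.1 z' w') p.1 z w p.2 q.2


set_option maxHeartbeats 1000000

open Matrix Metric Set MeasureTheory

section AuxiliaryLemmas


noncomputable def md {n r : ℕ} (F : (Fin n → ℂ) → Matrix (Fin r) (Fin r) ℂ) (i : Fin n)
    (z : Fin n → ℂ) : Matrix (Fin r) (Fin r) ℂ :=
  Matrix.of fun a b => fderiv ℂ (fun z' => F z' a b) z (Pi.single i 1)

variable {n r : ℕ} {F K : (Fin n → ℂ) → Matrix (Fin r) (Fin r) ℂ} {i : Fin n} {z : Fin n → ℂ}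

lemma isOpen_polydisc' (n : ℕ) : IsOpen {z : Fin n → ℂ | ∀ i, ‖z i‖ < 1} := by
  have : {z : Fin n → ℂ | ∀ i, ‖z i‖ < 1} = Set.pi Set.univ (fun _ => ball (0:ℂ) 1) := by
    ext z; simp [Complex.dist_eq]
  rw [this]
  exact isOpen_set_pi Set.finite_univ (fun _ _ => isOpen_ball)

lemma md_congr (h : F =ᶠ[nhds z] K) : md F i z = md K i z := by
  ext a b
  have h' : (fun z' => F z' a b) =ᶠ[nhds z] (fun z' => K z' a b) :=
    h.mono fun x hx => congrFun (congrFun hx a) b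
  simp only [md, of_apply, h'.fderiv_eq]

lemma md_const (C : Matrix (Fin r) (Fin r) ℂ) : md (fun _ => C) i z = 0 := by
  ext a b; simp [md]

lemma md_add_const (C : Matrix (Fin r) (Fin r) ℂ) :
    md (fun z' => F z' + C) i z = md F i z := by
  ext a b
  simp only [md, of_apply, Matrix.add_apply]
  rw [fderiv_add_const]

lemma md_mul (hF : ∀ a b, DifferentiableAt ℂ (fun z' => F z' a b) z)
    (hK : ∀ a b, DifferentiableAt ℂ (fun z' => K z' a b) z) :
    md (fun z' => F z' * K z') i z = md F i z * K z + F z * md K i z := by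
  ext a b
  have : (fun z' => (F z' * K z') a b) = fun z' => ∑ c, F z' a c * K z' c b := by
    funext z'; simp [Matrix.mul_apply]
  simp only [md, of_apply, this, Matrix.add_apply, Matrix.mul_apply]
  rw [fderiv_fun_sum (A := fun c z' => F z' a c * K z' c b) (fun c _ => (hF a c).mul (hK c b))]
  rw [ContinuousLinearMap.sum_apply]
  rw [← Finset.sum_add_distrib]
  refine Finset.sum_congr rfl fun c _ => ?_
  rw [fderiv_fun_mul (hF a c) (hK c b)]
  simp [mul_comm]
  ring

lemma md_const_mul (C : Matrix (Fin r) (Fin r) ℂ)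
    (hF : ∀ a b, DifferentiableAt ℂ (fun z' => F z' a b) z) :
    md (fun z' => C * F z') i z = C * md F i z := by
  have := md_mul (F := fun _ => C) (K := F) (i := i) (z := z)
    (fun a b => differentiableAt_const _) hF
  simpa [md_const] using this

lemma md_mul_const (C : Matrix (Fin r) (Fin r) ℂ)
    (hF : ∀ a b, DifferentiableAt ℂ (fun z' => F z' a b) z) :
    md (fun z' => F z' * C) i z = md F i z * C := by
  have := md_mul (F := F) (K := fun _ => C) (i := i) (z := z)
    hF (fun a b => differentiableAt_const _)
  simpa [md_const] using this

lemma md_sum {ι : Type*} (s : Finset ι) (G : ι → (Fin n → ℂ) → Matrix (Fin r) (Fin r) ℂ)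
    (h : ∀ l ∈ s, ∀ a b, DifferentiableAt ℂ (fun z' => G l z' a b) z) :
    md (fun z' => ∑ l ∈ s, G l z') i z = ∑ l ∈ s, md (G l) i z := by
  ext a b
  simp only [md, of_apply, Matrix.sum_apply]
  rw [fderiv_fun_sum (fun l hl => h l hl a b)]
  simp

lemma md_smul (c : ℂ) (hF : ∀ a b, DifferentiableAt ℂ (fun z' => F z' a b) z) :
    md (fun z' => c • F z') i z = c • md F i z := by
  ext a b
  simp only [md, of_apply, Matrix.smul_apply, smul_eq_mul]
  rw [fderiv_const_mul (hF a b)]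
  simp

variable {n r : ℕ} {z : Fin n → ℂ}

lemma fderiv_single_comp (f : (Fin n → ℂ) → ℂ) (G : (Fin n → ℂ) → (Fin n → ℂ)) (i : Fin n)
    (hf : DifferentiableAt ℂ f (G z)) (hG : ∀ k, DifferentiableAt ℂ (fun z' => G z' k) z) :
    fderiv ℂ (fun z' => f (G z')) z (Pi.single i 1) =
      ∑ k, fderiv ℂ (fun z' => G z' k) z (Pi.single i 1) * fderiv ℂ f (G z) (Pi.single k 1) := by
  have hG' : DifferentiableAt ℂ G z := by
    have : G = fun x k => G x k := rfl
    rw [this]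
    exact differentiableAt_pi.mpr hG
  have hcomp : (fun z' => f (G z')) = f ∘ G := rfl
  rw [hcomp, fderiv_comp z hf hG']
  simp only [ContinuousLinearMap.coe_comp', Function.comp_apply]
  have hGpi : fderiv ℂ G z = ContinuousLinearMap.pi fun k => fderiv ℂ (fun z' => G z' k) z := by
    have : G = fun x k => G x k := rfl
    rw [this, fderiv_pi hG]
  rw [hGpi]
  set v : Fin n → ℂ := fun k => fderiv ℂ (fun z' => G z' k) z (Pi.single i 1) with hv
  have hval : (ContinuousLinearMap.pi fun k => fderiv ℂ (fun z' => G z' k) z) (Pi.single i 1) = v := rfl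
  rw [hval]
  have hvsum : v = ∑ k, v k • (Pi.single k 1 : Fin n → ℂ) := by
    funext m
    simp [Finset.sum_apply, Pi.single_apply]
  calc fderiv ℂ f (G z) v = fderiv ℂ f (G z) (∑ k, v k • (Pi.single k 1 : Fin n → ℂ)) := by rw [← hvsum]
    _ = ∑ k, v k * fderiv ℂ f (G z) (Pi.single k 1) := by
        rw [map_sum]
        refine Finset.sum_congr rfl fun k _ => ?_
        rw [(fderiv ℂ f (G z)).map_smul]; rfl

lemma md_comp (F : (Fin n → ℂ) → Matrix (Fin r) (Fin r) ℂ) (G : (Fin n → ℂ) → (Fin n → ℂ))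
    (i : Fin n)
    (hG : ∀ k, DifferentiableAt ℂ (fun z' => G z' k) z)
    (hF : ∀ a b, DifferentiableAt ℂ (fun u => F u a b) (G z)) :
    md (fun z' => F (G z')) i z =
      ∑ k, (fderiv ℂ (fun z' => G z' k) z (Pi.single i 1)) • md F k (G z) := by
  ext a b
  simp only [md, of_apply, Matrix.sum_apply, Matrix.smul_apply, smul_eq_mul]
  exact fderiv_single_comp (fun u => F u a b) G i (hF a b) hG

lemma diff_det {F : (Fin n → ℂ) → Matrix (Fin r) (Fin r) ℂ}
    (hF : ∀ a b, DifferentiableAt ℂ (fun z' => F z' a b) z) :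
    DifferentiableAt ℂ (fun z' => (F z').det) z := by
  simp only [Matrix.det_apply']
  refine DifferentiableAt.fun_sum fun σ _ => DifferentiableAt.const_mul ?_ _
  exact (HasFDerivAt.finset_prod (fun a _ => (hF (σ a) a).hasFDerivAt)).differentiableAt

lemma diff_inv_entry {F : (Fin n → ℂ) → Matrix (Fin r) (Fin r) ℂ}
    (hF : ∀ a b, DifferentiableAt ℂ (fun z' => F z' a b) z) (h : IsUnit (F z)) :
    ∀ a b, DifferentiableAt ℂ (fun z' => (F z')⁻¹ a b) z := by
  intro a b
  have hdet : DifferentiableAt ℂ (fun z' => (F z').det) z := diff_det hF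
  have hne : (F z).det ≠ 0 := by
    have := (Matrix.isUnit_iff_isUnit_det (F z)).mp h
    exact IsUnit.ne_zero this
  have heq : (fun z' => (F z')⁻¹ a b) =
      fun z' => ((F z').det)⁻¹ * ((F z').updateRow b (Pi.single a 1)).det := by
    funext z'
    rw [Matrix.inv_def]
    simp [Matrix.smul_apply, Ring.inverse_eq_inv', Matrix.adjugate_apply, smul_eq_mul]
  rw [heq]
  refine (hdet.inv hne).mul (diff_det ?_)
  intro c d
  have : (fun z' => ((F z').updateRow b (Pi.single a 1)) c d) =
      fun z' => if c = b then (Pi.single a 1 : Fin r → ℂ) d else F z' c d := by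
    funext z'; rw [Matrix.updateRow_apply]
  rw [this]
  by_cases hc : c = b <;> simp [hc] <;> exact hF c d

lemma diff_fst {f : ((Fin n → ℂ) × (Fin n → ℂ)) → ℂ} {p : (Fin n → ℂ) × (Fin n → ℂ)}
    (hf : DifferentiableAt ℂ f p) :
    DifferentiableAt ℂ (fun u => f (u, p.2)) p.1 :=
  hf.comp p.1 (differentiableAt_id.prodMk (differentiableAt_const _))

lemma diff_snd {f : ((Fin n → ℂ) × (Fin n → ℂ)) → ℂ} {p : (Fin n → ℂ) × (Fin n → ℂ)}
    (hf : DifferentiableAt ℂ f p) :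
    DifferentiableAt ℂ (fun v => f (p.1, v)) p.2 :=
  hf.comp p.2 ((differentiableAt_const _).prodMk differentiableAt_id)


lemma norm_fderiv_le_of_bound {X : Type*} [NormedAddCommGroup X] [NormedSpace ℂ X]
    {ψ : X → ℂ} {s : Set X} (hs : IsOpen s) (hψ : DifferentiableOn ℂ ψ s)
    {p : X} {δ M : ℝ} (hδ : 0 < δ) (hM0 : 0 ≤ M) (hball : closedBall p δ ⊆ s)
    (hM : ∀ q ∈ closedBall p δ, ‖ψ q‖ ≤ M) :
    ‖fderiv ℂ ψ p‖ ≤ M / (δ / 2) := by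
  have hψat : ∀ q ∈ closedBall p δ, DifferentiableAt ℂ ψ q := fun q hq =>
    hψ.differentiableAt (hs.mem_nhds (hball hq))
  refine ContinuousLinearMap.opNorm_le_bound _ (div_nonneg hM0 (by linarith)) (fun v => ?_)
  rcases eq_or_ne v 0 with rfl | hv
  · simp
  have hvn : (0:ℝ) < ‖v‖ := norm_pos_iff.mpr hv
  set w : X := ((‖v‖ : ℂ))⁻¹ • v with hw
  have hnw : ‖w‖ = 1 := by
    rw [hw, norm_smul, norm_inv, Complex.norm_real, Real.norm_eq_abs, abs_of_pos hvn,
      inv_mul_cancel₀ hvn.ne']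
  have hvw : v = (‖v‖ : ℂ) • w := by
    rw [hw, smul_smul, mul_inv_cancel₀ (by exact_mod_cast hvn.ne'), one_smul]
  have hmem : ∀ τ : ℂ, ‖τ‖ ≤ δ → p + τ • w ∈ closedBall p δ := by
    intro τ hτ
    rw [mem_closedBall, dist_eq_norm, add_sub_cancel_left, norm_smul, hnw, mul_one]
    exact hτ
  have hlinediff : ∀ τ : ℂ, DifferentiableAt ℂ (fun τ' : ℂ => p + τ' • w) τ := fun τ =>
    ((((hasDerivAt_id τ).smul_const w).const_add p)).differentiableAt
  have key : ‖fderiv ℂ ψ p w‖ ≤ M / (δ / 2) := by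
    have hline : HasDerivAt (fun τ : ℂ => p + τ • w) w 0 := by
      simpa using ((hasDerivAt_id (0:ℂ)).smul_const w).const_add p
    have hσ : HasDerivAt (fun τ : ℂ => ψ (p + τ • w)) (fderiv ℂ ψ p w) 0 := by
      have hfd := (hψat p (mem_closedBall_self hδ.le)).hasFDerivAt
      exact HasFDerivAt.comp_hasDerivAt 0 (by simpa using hfd) hline
    rw [← hσ.deriv]
    apply Complex.norm_deriv_le_of_forall_mem_sphere_norm_le (half_pos hδ)
    · constructor
      · intro τ hτ
        have hτ' : ‖τ‖ ≤ δ := by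
          rw [mem_ball, dist_zero_right] at hτ; linarith
        exact ((hψat _ (hmem τ hτ')).comp τ (hlinediff τ)).differentiableWithinAt
      · rw [closure_ball (0:ℂ) (by positivity : δ/2 ≠ 0)]
        intro τ hτ
        have hτ' : ‖τ‖ ≤ δ := by
          rw [mem_closedBall, dist_zero_right] at hτ; linarith
        exact (((hψat _ (hmem τ hτ')).comp τ (hlinediff τ)).continuousAt).continuousWithinAt
    · intro τ hτ
      have hτ' : ‖τ‖ ≤ δ := by
        rw [mem_sphere, dist_zero_right] at hτ; rw [hτ]; linarith
      exact hM _ (hmem τ hτ')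
  calc ‖fderiv ℂ ψ p v‖ = ‖v‖ * ‖fderiv ℂ ψ p w‖ := by
        conv_lhs => rw [hvw]
        rw [(fderiv ℂ ψ p).map_smul, norm_smul, Complex.norm_real, Real.norm_eq_abs,
          abs_of_pos hvn]
    _ ≤ ‖v‖ * (M / (δ / 2)) := by
        exact mul_le_mul_of_nonneg_left key hvn.le
    _ = M / (δ / 2) * ‖v‖ := by ring

lemma diff_param_deriv {n : ℕ} {s : Set ((Fin n → ℂ) × ℂ)} (hs : IsOpen s)
    {ψ : ((Fin n → ℂ) × ℂ) → ℂ} (hψ : DifferentiableOn ℂ ψ s)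
    {x₀ : Fin n → ℂ} {t₀ : ℂ} (h₀ : (x₀, t₀) ∈ s) :
    DifferentiableAt ℂ (fun x => deriv (fun t => ψ (x, t)) t₀) x₀ := by
  obtain ⟨R, hR, hRs⟩ : ∃ R > 0, closedBall (x₀, t₀) R ⊆ s := by
    rcases Metric.isOpen_iff.mp hs _ h₀ with ⟨ε, hε, hb⟩
    exact ⟨ε/2, by linarith, (closedBall_subset_ball (by linarith)).trans hb⟩
  set ρ : ℝ := R / 2 with hρdef
  have hρ : 0 < ρ := by positivity
  set ε : ℝ := R / 4 with hεdef
  have hε : 0 < ε := by positivity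
  -- bound on ψ on the big closed ball
  obtain ⟨M, hM⟩ := (isCompact_closedBall ((x₀, t₀) : (Fin n → ℂ) × ℂ) R).exists_bound_of_continuousOn
    ((hψ.continuousOn).mono hRs)
  have hM0 : 0 ≤ M := le_trans (norm_nonneg _) (hM _ (mem_closedBall_self hR.le))
  -- differentiability points
  have hψat : ∀ q ∈ closedBall ((x₀, t₀) : (Fin n → ℂ) × ℂ) R, DifferentiableAt ℂ ψ q := fun q hq =>
    hψ.differentiableAt (hs.mem_nhds (hRs hq))
  -- membership facts
  have hmem1 : ∀ x ∈ ball x₀ ε, ∀ θ : ℝ,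
      closedBall ((x, circleMap t₀ ρ θ) : (Fin n → ℂ) × ℂ) (R/4) ⊆
        closedBall ((x₀, t₀) : (Fin n → ℂ) × ℂ) R := by
    intro x hx θ
    intro q hq
    rw [mem_closedBall] at hq ⊢
    have h1 : dist ((x, circleMap t₀ ρ θ) : (Fin n → ℂ) × ℂ) (x₀, t₀) ≤ ρ := by
      rw [Prod.dist_eq]
      apply max_le
      · have := mem_ball.mp hx; dsimp only; linarith
      · have : circleMap t₀ ρ θ ∈ sphere t₀ ρ := circleMap_mem_sphere t₀ hρ.le θ
        rw [mem_sphere] at this; dsimp only; rw [this]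
    calc dist q ((x₀, t₀) : (Fin n → ℂ) × ℂ) ≤ dist q (x, circleMap t₀ ρ θ) +
          dist ((x, circleMap t₀ ρ θ) : (Fin n → ℂ) × ℂ) (x₀, t₀) := dist_triangle _ _ _
      _ ≤ R/4 + ρ := add_le_add hq h1
      _ ≤ R := by rw [hρdef]; linarith
  -- the scalar kernel
  set c : ℝ → ℂ := fun θ => circleMap 0 ρ θ * Complex.I * ((circleMap 0 ρ θ) ^ 2)⁻¹ with hcdef
  have hcne : ∀ θ, circleMap 0 ρ θ ≠ 0 := fun θ => circleMap_ne_center hρ.ne'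
  have hcabs : ∀ θ, ‖c θ‖ = ρ⁻¹ := by
    intro θ
    rw [hcdef]
    simp only [norm_mul, norm_inv, norm_pow, norm_circleMap_zero, Complex.norm_I,
      abs_of_pos hρ]
    field_simp
  have hccont : Continuous c := by
    apply Continuous.mul
    · exact (continuous_circleMap 0 ρ).mul continuous_const
    · exact (((continuous_circleMap 0 ρ).pow 2).inv₀ (fun θ => pow_ne_zero _ (hcne θ)))
  set μ : Measure ℝ := volume.restrict (Set.Ioc 0 (2 * Real.pi)) with hμdef
  set F : (Fin n → ℂ) → ℝ → ℂ := fun x θ => c θ * ψ (x, circleMap t₀ ρ θ) with hFdef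
  set F' : (Fin n → ℂ) → ℝ → ((Fin n → ℂ) →L[ℂ] ℂ) := fun x θ =>
    c θ • ((fderiv ℂ ψ (x, circleMap t₀ ρ θ)).comp
      (ContinuousLinearMap.inl ℂ (Fin n → ℂ) ℂ)) with hF'def
  -- continuity in θ
  have hFcont : ∀ x ∈ ball x₀ ε, Continuous (fun θ => F x θ) := by
    intro x hx
    apply hccont.mul
    apply ContinuousOn.comp_continuous ((hψ.continuousOn).mono hRs)
      (Continuous.prodMk_right x |>.comp (continuous_circleMap t₀ ρ))
    intro θ
    exact hmem1 x hx θ (mem_closedBall_self (by positivity))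
  have hx₀ : x₀ ∈ ball x₀ ε := mem_ball_self hε
  -- HasFDerivAt facts
  have hdiff : ∀ θ : ℝ, ∀ x ∈ ball x₀ ε, HasFDerivAt (fun x' => F x' θ) (F' x θ) x := by
    intro θ x hx
    have h1 : DifferentiableAt ℂ ψ (x, circleMap t₀ ρ θ) :=
      hψat _ (hmem1 x hx θ (mem_closedBall_self (by positivity)))
    have h2 : HasFDerivAt (fun x' : Fin n → ℂ => ((x', circleMap t₀ ρ θ) : (Fin n → ℂ) × ℂ))
        (ContinuousLinearMap.inl ℂ (Fin n → ℂ) ℂ) x := hasFDerivAt_prodMk_left x _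
    exact (h1.hasFDerivAt.comp x h2).const_mul (c θ)
  -- bound on F'
  have hbound : ∀ θ : ℝ, ∀ x ∈ ball x₀ ε, ‖F' x θ‖ ≤ ρ⁻¹ * (M / (R/4/2)) := by
    intro θ x hx
    have hfb : ‖fderiv ℂ ψ (x, circleMap t₀ ρ θ)‖ ≤ M / (R/4/2) := by
      apply norm_fderiv_le_of_bound hs hψ (by positivity) hM0
        ((hmem1 x hx θ).trans hRs)
      intro q hq
      exact hM q (hmem1 x hx θ hq)
    have hinl : ‖(fderiv ℂ ψ (x, circleMap t₀ ρ θ)).comp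
        (ContinuousLinearMap.inl ℂ (Fin n → ℂ) ℂ)‖ ≤ ‖fderiv ℂ ψ (x, circleMap t₀ ρ θ)‖ := by
      apply ContinuousLinearMap.opNorm_le_bound _ (norm_nonneg _)
      intro v
      rw [ContinuousLinearMap.comp_apply]
      calc ‖fderiv ℂ ψ (x, circleMap t₀ ρ θ) (ContinuousLinearMap.inl ℂ (Fin n → ℂ) ℂ v)‖ ≤
            ‖fderiv ℂ ψ (x, circleMap t₀ ρ θ)‖ * ‖ContinuousLinearMap.inl ℂ (Fin n → ℂ) ℂ v‖ :=
          ContinuousLinearMap.le_opNorm _ _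
        _ ≤ ‖fderiv ℂ ψ (x, circleMap t₀ ρ θ)‖ * ‖v‖ := by
            apply mul_le_mul_of_nonneg_left _ (norm_nonneg _)
            rw [ContinuousLinearMap.inl_apply]
            rw [Prod.norm_def]
            simp
    have hFx : F' x θ = c θ • ((fderiv ℂ ψ (x, circleMap t₀ ρ θ)).comp
        (ContinuousLinearMap.inl ℂ (Fin n → ℂ) ℂ)) := rfl
    rw [hFx]
    calc ‖c θ • (fderiv ℂ ψ (x, circleMap t₀ ρ θ)).comp (ContinuousLinearMap.inl ℂ (Fin n → ℂ) ℂ)‖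
        ≤ ‖c θ‖ * ‖(fderiv ℂ ψ (x, circleMap t₀ ρ θ)).comp
            (ContinuousLinearMap.inl ℂ (Fin n → ℂ) ℂ)‖ := ContinuousLinearMap.opNorm_smul_le _ _
      _ = ρ⁻¹ * ‖(fderiv ℂ ψ (x, circleMap t₀ ρ θ)).comp
            (ContinuousLinearMap.inl ℂ (Fin n → ℂ) ℂ)‖ := by rw [hcabs θ]
      _ ≤ ρ⁻¹ * ‖fderiv ℂ ψ (x, circleMap t₀ ρ θ)‖ :=
          mul_le_mul_of_nonneg_left hinl (by positivity)
      _ ≤ ρ⁻¹ * (M / (R/4/2)) := mul_le_mul_of_nonneg_left hfb (by positivity)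
  -- measurability of F'
  have hF'meas : AEStronglyMeasurable (F' x₀) μ := by
    have m1 : Measurable (fun θ => fderiv ℂ ψ (x₀, circleMap t₀ ρ θ)) :=
      (measurable_fderiv ℂ ψ).comp
        ((Continuous.prodMk_right x₀ |>.comp (continuous_circleMap t₀ ρ)).measurable)
    have m2 : Measurable (fun θ => (fderiv ℂ ψ (x₀, circleMap t₀ ρ θ)).comp
        (ContinuousLinearMap.inl ℂ (Fin n → ℂ) ℂ)) := by
      have hcont : Continuous (fun A : ((Fin n → ℂ) × ℂ) →L[ℂ] ℂ =>
          A.comp (ContinuousLinearMap.inl ℂ (Fin n → ℂ) ℂ)) :=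
        ((ContinuousLinearMap.compSL (Fin n → ℂ) ((Fin n → ℂ) × ℂ) ℂ (RingHom.id ℂ)
          (RingHom.id ℂ)).flip (ContinuousLinearMap.inl ℂ (Fin n → ℂ) ℂ)).continuous
      exact hcont.measurable.comp m1
    exact ((hccont.stronglyMeasurable).smul (m2.stronglyMeasurable)).aestronglyMeasurable
  -- integrability
  have hFint : Integrable (F x₀) μ := (hFcont x₀ hx₀).integrableOn_Ioc
  have hboundint : Integrable (fun _ : ℝ => ρ⁻¹ * (M / (R/4/2))) μ := by
    exact integrableOn_const measure_Ioc_lt_top.ne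
  have hmain := hasFDerivAt_integral_of_dominated_of_fderiv_le (𝕜 := ℂ)
    (F := F) (F' := F') (x₀ := x₀) (μ := μ) (bound := fun _ => ρ⁻¹ * (M / (R/4/2))) (ball_mem_nhds x₀ hε)
    (Filter.eventually_of_mem (ball_mem_nhds x₀ hε)
      (fun x hx => ((hFcont x hx).aestronglyMeasurable)))
    hFint hF'meas
    (Filter.Eventually.of_forall (fun θ => fun x hx => hbound θ x hx))
    hboundint
    (Filter.Eventually.of_forall (fun θ => fun x hx => hdiff θ x hx))
  -- the integral equals cderiv up to constant
  have hID : DifferentiableAt ℂ (fun x => (2 * Real.pi * Complex.I : ℂ)⁻¹ * ∫ θ, F x θ ∂μ) x₀ :=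
    (hmain.differentiableAt).const_mul _
  apply hID.congr_of_eventuallyEq
  apply Filter.eventually_of_mem (ball_mem_nhds x₀ hε)
  intro x hx
  show deriv (fun t => ψ (x, t)) t₀ = (2 * Real.pi * Complex.I : ℂ)⁻¹ * ∫ θ, F x θ ∂μ
  have hUx : IsOpen {t : ℂ | ((x, t) : (Fin n → ℂ) × ℂ) ∈ s} :=
    hs.preimage (Continuous.prodMk_right x)
  have hsub : closedBall t₀ ρ ⊆ {t : ℂ | ((x, t) : (Fin n → ℂ) × ℂ) ∈ s} := by
    intro t ht
    apply hRs
    rw [mem_closedBall] at ht ⊢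
    rw [Prod.dist_eq]
    apply max_le
    · have := mem_ball.mp hx; dsimp only; rw [hεdef] at this; linarith
    · dsimp only; rw [hρdef] at ht; linarith
  have hdOn : DifferentiableOn ℂ (fun t => ψ (x, t)) {t : ℂ | ((x, t) : (Fin n → ℂ) × ℂ) ∈ s} := by
    intro t ht
    exact ((hψ.differentiableAt (hs.mem_nhds ht)).comp t
      ((differentiableAt_const x).prodMk differentiableAt_id)).differentiableWithinAt
  have hcd := Complex.cderiv_eq_deriv hUx hdOn hρ hsub
  rw [← hcd]
  -- now unfold cderiv as an integral over μ
  rw [Complex.cderiv]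
  rw [circleIntegral_def_Icc]
  rw [← MeasureTheory.integral_Icc_eq_integral_Ioc]
  have : ∀ θ : ℝ, deriv (circleMap t₀ ρ) θ •
      ((circleMap t₀ ρ θ - t₀) ^ 2)⁻¹ • ψ (x, circleMap t₀ ρ θ) = F x θ := by
    intro θ
    rw [deriv_circleMap, circleMap_sub_center, smul_eq_mul, smul_eq_mul, hFdef, hcdef]
    ring
  simp_rw [this]
  rw [smul_eq_mul]

lemma diff_pd2_fst {n r : ℕ} {U V : Set (Fin n → ℂ)} (hU : IsOpen U) (hV : IsOpen V)
    (L : (Fin n → ℂ) → (Fin n → ℂ) → Matrix (Fin r) (Fin r) ℂ)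
    (hL : ∀ a b : Fin r, DifferentiableOn ℂ
      (fun p : (Fin n → ℂ) × (Fin n → ℂ) => L p.1 p.2 a b) (U ×ˢ V))
    {z w : Fin n → ℂ} (hz : z ∈ U) (hw : w ∈ V) (j : Fin n) (a b : Fin r) :
    DifferentiableAt ℂ (fun u => pd2 L j u w a b) z := by
  set Φ : ((Fin n → ℂ) × ℂ) → (Fin n → ℂ) × (Fin n → ℂ) :=
    fun p => (p.1, w + p.2 • (Pi.single j 1 : Fin n → ℂ)) with hΦdef
  have hΦdiff : Differentiable ℂ Φ := by
    apply Differentiable.prodMk differentiable_fst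
    apply Differentiable.const_add
    exact fun p => ((differentiableAt_snd).smul_const (Pi.single j 1))
  set s : Set ((Fin n → ℂ) × ℂ) := Φ ⁻¹' (U ×ˢ V) with hsdef
  have hs : IsOpen s := (hU.prod hV).preimage hΦdiff.continuous
  set ψ : ((Fin n → ℂ) × ℂ) → ℂ := fun p => L (Φ p).1 (Φ p).2 a b with hψdef
  have hψ : DifferentiableOn ℂ ψ s := by
    intro p hp
    have h1 : DifferentiableAt ℂ (fun q : (Fin n → ℂ) × (Fin n → ℂ) => L q.1 q.2 a b) (Φ p) :=
      (hL a b).differentiableAt ((hU.prod hV).mem_nhds hp)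
    exact (h1.comp p (hΦdiff p)).differentiableWithinAt
  have h₀ : ((z, (0:ℂ)) : (Fin n → ℂ) × ℂ) ∈ s := by
    simp only [hsdef, mem_preimage, hΦdef, zero_smul, add_zero]
    exact Set.mk_mem_prod hz hw
  have hkey := diff_param_deriv hs hψ h₀
  apply hkey.congr_of_eventuallyEq
  apply Filter.eventually_of_mem (hU.mem_nhds hz)
  intro u hu
  show pd2 L j u w a b = deriv (fun t => ψ (u, t)) 0
  have hg : DifferentiableAt ℂ (fun w' => L u w' a b) w := by
    have h1 : DifferentiableAt ℂ (fun q : (Fin n → ℂ) × (Fin n → ℂ) => L q.1 q.2 a b) (u, w) :=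
      (hL a b).differentiableAt ((hU.prod hV).mem_nhds (Set.mk_mem_prod hu hw))
    exact h1.comp w ((differentiableAt_const u).prodMk differentiableAt_id)
  have hline : HasDerivAt (fun t : ℂ => w + t • (Pi.single j 1 : Fin n → ℂ)) ((Pi.single j 1 : Fin n → ℂ)) 0 := by
    simpa using ((hasDerivAt_id (0:ℂ)).smul_const ((Pi.single j 1 : Fin n → ℂ))).const_add w
  have hcomp : HasDerivAt (fun t => ψ (u, t))
      (fderiv ℂ (fun w' => L u w' a b) w (Pi.single j 1)) 0 := by
    have := HasFDerivAt.comp_hasDerivAt 0 (by simpa using hg.hasFDerivAt) hline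
    exact this
  rw [hcomp.deriv]
  rfl

end AuxiliaryLemmas

/-- Transformation rule for the curvature of a quasi-invariant kernel
(sesquiholomorphic form): if `L(z,w) = J(z) · L(G(z), H(w)) · J'(w)` on the polydisc, then
`𝒦(z,w) = (DG(z)ᵀ ⊗ J'(w)⁻¹) · 𝒦(G(z), H(w)) · (DH(w) ⊗ J'(w))`. -/
theorem statement0 {n r : ℕ} (hn : 1 ≤ n) (hr : 1 ≤ r)
    (L : (Fin n → ℂ) → (Fin n → ℂ) → Matrix (Fin r) (Fin r) ℂ)
    (G H : (Fin n → ℂ) → (Fin n → ℂ))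
    (J J' : (Fin n → ℂ) → Matrix (Fin r) (Fin r) ℂ)
    (hLinv : ∀ z ∈ polydisc n, ∀ w ∈ polydisc n, IsUnit (L z w))
    (hLhol : ∀ a b : Fin r, DifferentiableOn ℂ
      (fun p : (Fin n → ℂ) × (Fin n → ℂ) => L p.1 p.2 a b) (polydisc n ×ˢ polydisc n))
    (hG : Set.MapsTo G (polydisc n) (polydisc n))
    (hH : Set.MapsTo H (polydisc n) (polydisc n))
    (hGhol : ∀ i : Fin n, DifferentiableOn ℂ (fun z => G z i) (polydisc n))
    (hHhol : ∀ i : Fin n, DifferentiableOn ℂ (fun w => H w i) (polydisc n))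
    (hJinv : ∀ z ∈ polydisc n, IsUnit (J z))
    (hJ'inv : ∀ w ∈ polydisc n, IsUnit (J' w))
    (hJhol : ∀ a b : Fin r, DifferentiableOn ℂ (fun z => J z a b) (polydisc n))
    (hJ'hol : ∀ a b : Fin r, DifferentiableOn ℂ (fun w => J' w a b) (polydisc n))
    (htrans : ∀ z ∈ polydisc n, ∀ w ∈ polydisc n,
      L z w = J z * L (G z) (H w) * J' w) :
    ∀ z ∈ polydisc n, ∀ w ∈ polydisc n,
      curvMat L z w =
        ((jacobianMat G z)ᵀ ⊗ₖ (J' w)⁻¹) * curvMat L (G z) (H w) *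
          ((jacobianMat H w) ⊗ₖ (J' w)) := by
  intro z hz w hw
  have hU : IsOpen (polydisc n) := isOpen_polydisc' n
  set U := polydisc n with hUdef
  set z0 := G z with hz0def
  set w0 := H w with hw0def
  have hz0 : z0 ∈ U := hG hz
  have hw0 : w0 ∈ U := hH hw
  set Θ : Fin n → (Fin n → ℂ) → (Fin n → ℂ) → Matrix (Fin r) (Fin r) ℂ :=
    fun j z' w' => (L z' w')⁻¹ * pd2 L j z' w' with hΘdef
  -- basic differentiability facts
  have hLdiffAt : ∀ z' ∈ U, ∀ w' ∈ U, ∀ a b : Fin r,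
      DifferentiableAt ℂ (fun p : (Fin n → ℂ) × (Fin n → ℂ) => L p.1 p.2 a b) (z', w') :=
    fun z' hz' w' hw' a b => (hLhol a b).differentiableAt
      ((hU.prod hU).mem_nhds (Set.mk_mem_prod hz' hw'))
  have hLfst : ∀ z' ∈ U, ∀ w' ∈ U, ∀ a b : Fin r,
      DifferentiableAt ℂ (fun u => L u w' a b) z' := fun z' hz' w' hw' a b =>
    diff_fst (p := (z', w')) (hLdiffAt z' hz' w' hw' a b)
  have hLsnd : ∀ z' ∈ U, ∀ w' ∈ U, ∀ a b : Fin r,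
      DifferentiableAt ℂ (fun v => L z' v a b) w' := fun z' hz' w' hw' a b =>
    (hLdiffAt z' hz' w' hw' a b).comp w' ((differentiableAt_const _).prodMk differentiableAt_id)
  have hLinvfst : ∀ z' ∈ U, ∀ w' ∈ U, ∀ a b : Fin r,
      DifferentiableAt ℂ (fun u => (L u w')⁻¹ a b) z' := fun z' hz' w' hw' =>
    diff_inv_entry (fun a b => hLfst z' hz' w' hw' a b) (hLinv z' hz' w' hw')
  have hpd2fst : ∀ (l : Fin n), ∀ z' ∈ U, ∀ w' ∈ U, ∀ a b : Fin r,
      DifferentiableAt ℂ (fun u => pd2 L l u w' a b) z' := fun l z' hz' w' hw' a b =>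
    diff_pd2_fst hU hU L hLhol hz' hw' l a b
  have hΘfst : ∀ (l : Fin n), ∀ z' ∈ U, ∀ w' ∈ U, ∀ a b : Fin r,
      DifferentiableAt ℂ (fun u => Θ l u w' a b) z' := by
    intro l z' hz' w' hw' a b
    have : (fun u => Θ l u w' a b) =
        fun u => ∑ c, (L u w')⁻¹ a c * pd2 L l u w' c b := by
      funext u; rw [hΘdef]; simp [Matrix.mul_apply]
    rw [this]
    exact DifferentiableAt.fun_sum fun c _ =>
      (hLinvfst z' hz' w' hw' a c).mul (hpd2fst l z' hz' w' hw' c b)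
  have hHdiffAt : DifferentiableAt ℂ H w := by
    have : H = fun x k => H x k := rfl
    rw [this]
    exact differentiableAt_pi.mpr fun k => (hHhol k).differentiableAt (hU.mem_nhds hw)
  -- Step 1
  have step1 : ∀ j : Fin n, ∀ z' ∈ U,
      Θ j z' w = (J' w)⁻¹ * (∑ l, jacobianMat H w l j • Θ l (G z') w0) * J' w +
        (J' w)⁻¹ * md (fun v => J' v) j w := by
    intro j z' hz'
    set z0' := G z' with hz0'def
    have hz0' : z0' ∈ U := hG hz'
    have hev : (fun v => L z' v) =ᶠ[nhds w] (fun v => J z' * L z0' (H v) * J' v) :=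
      Filter.eventually_of_mem (hU.mem_nhds hw) (fun v hv => htrans z' hz' v hv)
    have e1 : pd2 L j z' w = md (fun v => J z' * L z0' (H v) * J' v) j w := md_congr hev
    have hPdiff : ∀ a b : Fin r, DifferentiableAt ℂ (fun v => L z0' (H v) a b) w :=
      fun a b => (hLsnd z0' hz0' w0 hw0 a b).comp w hHdiffAt
    have hJPdiff : ∀ a b : Fin r, DifferentiableAt ℂ (fun v => (J z' * L z0' (H v)) a b) w := by
      intro a b
      have : (fun v => (J z' * L z0' (H v)) a b) =
          fun v => ∑ c, J z' a c * L z0' (H v) c b := by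
        funext v; simp [Matrix.mul_apply]
      rw [this]
      exact DifferentiableAt.fun_sum fun c _ => (hPdiff c b).const_mul _
    have hJ'diff : ∀ a b : Fin r, DifferentiableAt ℂ (fun v => J' v a b) w :=
      fun a b => (hJ'hol a b).differentiableAt (hU.mem_nhds hw)
    have e2 : md (fun v => J z' * L z0' (H v) * J' v) j w =
        (J z' * md (fun v => L z0' (H v)) j w) * J' w +
          (J z' * L z0' w0) * md (fun v => J' v) j w := by
      rw [md_mul hJPdiff hJ'diff, md_const_mul (J z') hPdiff]
    have e3 : md (fun v => L z0' (H v)) j w = ∑ l, jacobianMat H w l j • pd2 L l z0' w0 := by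
      have := md_comp (fun v => L z0' v) H j
        (fun k => (hHhol k).differentiableAt (hU.mem_nhds hw))
        (fun a b => hLsnd z0' hz0' w0 hw0 a b)
      rw [this]
      rfl
    have hinv : (L z' w)⁻¹ = (J' w)⁻¹ * ((L z0' w0)⁻¹ * (J z')⁻¹) := by
      rw [htrans z' hz' w hw, Matrix.mul_inv_rev, Matrix.mul_inv_rev]
    have hJc : (J z')⁻¹ * J z' = 1 :=
      Matrix.nonsing_inv_mul _ ((Matrix.isUnit_iff_isUnit_det _).mp (hJinv z' hz'))
    have hLc : (L z0' w0)⁻¹ * L z0' w0 = 1 :=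
      Matrix.nonsing_inv_mul _ ((Matrix.isUnit_iff_isUnit_det _).mp (hLinv z0' hz0' w0 hw0))
    have hcancelJ : ∀ X : Matrix (Fin r) (Fin r) ℂ, (J z')⁻¹ * (J z' * X) = X := fun X => by
      rw [← Matrix.mul_assoc, hJc, Matrix.one_mul]
    have hcancelL : ∀ X : Matrix (Fin r) (Fin r) ℂ, (L z0' w0)⁻¹ * (L z0' w0 * X) = X :=
      fun X => by rw [← Matrix.mul_assoc, hLc, Matrix.one_mul]
    have hΘexp : Θ j z' w = (L z' w)⁻¹ * pd2 L j z' w := rfl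
    rw [hΘexp, e1, e2, hinv, Matrix.mul_add]
    congr 1
    · -- main term
      have hdist : (L z0' w0)⁻¹ * (∑ l, jacobianMat H w l j • pd2 L l z0' w0) =
          ∑ l, jacobianMat H w l j • Θ l z0' w0 := by
        rw [Finset.mul_sum]
        exact Finset.sum_congr rfl fun l _ => mul_smul_comm _ _ _
      calc (J' w)⁻¹ * ((L z0' w0)⁻¹ * (J z')⁻¹) * (J z' * md (fun v => L z0' (H v)) j w * J' w)
          = (J' w)⁻¹ * ((L z0' w0)⁻¹ * ((J z')⁻¹ * (J z' * (md (fun v => L z0' (H v)) j w * J' w)))) := by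
            simp only [Matrix.mul_assoc]
        _ = (J' w)⁻¹ * ((L z0' w0)⁻¹ * (md (fun v => L z0' (H v)) j w * J' w)) := by
            rw [hcancelJ]
        _ = (J' w)⁻¹ * (((L z0' w0)⁻¹ * md (fun v => L z0' (H v)) j w) * J' w) := by
            simp only [Matrix.mul_assoc]
        _ = (J' w)⁻¹ * (∑ l, jacobianMat H w l j • Θ l z0' w0) * J' w := by
            rw [e3, hdist]
            simp only [Matrix.mul_assoc]
    · -- constant term
      calc (J' w)⁻¹ * ((L z0' w0)⁻¹ * (J z')⁻¹) * (J z' * L z0' w0 * md (fun v => J' v) j w)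
          = (J' w)⁻¹ * ((L z0' w0)⁻¹ * ((J z')⁻¹ * (J z' * (L z0' w0 * md (fun v => J' v) j w)))) := by
            simp only [Matrix.mul_assoc]
        _ = (J' w)⁻¹ * md (fun v => J' v) j w := by
            rw [hcancelJ, hcancelL]
  -- Step 2
  have hGdiff : ∀ k, DifferentiableAt ℂ (fun z' => G z' k) z :=
    fun k => (hGhol k).differentiableAt (hU.mem_nhds hz)
  have hΘGdiff : ∀ (l : Fin n) (a b : Fin r),
      DifferentiableAt ℂ (fun z' => Θ l (G z') w0 a b) z := by
    intro l a b
    have hGd : DifferentiableAt ℂ G z := by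
      have : G = fun x k => G x k := rfl
      rw [this]; exact differentiableAt_pi.mpr hGdiff
    exact (hΘfst l z0 hz0 w0 hw0 a b).comp z hGd
  ext ⟨i, a⟩ ⟨j, b⟩
  have hL1 : curvMat L z w (i, a) (j, b) = md (fun z' => Θ j z' w) i z a b := rfl
  have hKey : ∀ (k l : Fin n) (c d : Fin r),
      md (fun u => Θ l u w0) k z0 c d = curvMat L z0 w0 (k, c) (l, d) := fun _ _ _ _ => rfl
  have hmd : md (fun z' => Θ j z' w) i z =
      (J' w)⁻¹ * (∑ l, jacobianMat H w l j •
        ∑ k, jacobianMat G z k i • md (fun u => Θ l u w0) k z0) * J' w := by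
    have hev : (fun z' => Θ j z' w) =ᶠ[nhds z] (fun z' =>
        (J' w)⁻¹ * (∑ l, jacobianMat H w l j • Θ l (G z') w0) * J' w +
          (J' w)⁻¹ * md (fun v => J' v) j w) :=
      Filter.eventually_of_mem (hU.mem_nhds hz) (fun z' hz' => step1 j z' hz')
    rw [md_congr hev, md_add_const]
    have hM : ∀ a b : Fin r, DifferentiableAt ℂ
        (fun z' => (∑ l, jacobianMat H w l j • Θ l (G z') w0) a b) z := by
      intro a b
      have : (fun z' => (∑ l, jacobianMat H w l j • Θ l (G z') w0) a b) =
          fun z' => ∑ l, jacobianMat H w l j * Θ l (G z') w0 a b := by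
        funext z'; simp [Matrix.sum_apply, Matrix.smul_apply]
      rw [this]
      exact DifferentiableAt.fun_sum fun l _ => (hΘGdiff l a b).const_mul _
    have hAM : ∀ a b : Fin r, DifferentiableAt ℂ
        (fun z' => ((J' w)⁻¹ * (∑ l, jacobianMat H w l j • Θ l (G z') w0)) a b) z := by
      intro a b
      have : (fun z' => ((J' w)⁻¹ * (∑ l, jacobianMat H w l j • Θ l (G z') w0)) a b) =
          fun z' => ∑ c, (J' w)⁻¹ a c * (∑ l, jacobianMat H w l j • Θ l (G z') w0) c b := by
        funext z'; simp [Matrix.mul_apply]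
      rw [this]
      exact DifferentiableAt.fun_sum fun c _ => (hM c b).const_mul _
    rw [show (fun z' => (J' w)⁻¹ * (∑ l, jacobianMat H w l j • Θ l (G z') w0) * J' w)
        = fun z' => ((J' w)⁻¹ * (∑ l, jacobianMat H w l j • Θ l (G z') w0)) * J' w from rfl]
    rw [md_mul_const _ hAM, md_const_mul _ hM]
    congr 2
    rw [md_sum Finset.univ _ (fun l _ a b => by
      have : (fun z' => (jacobianMat H w l j • Θ l (G z') w0) a b) =
          fun z' => jacobianMat H w l j * Θ l (G z') w0 a b := by
        funext z'; simp [Matrix.smul_apply]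
      rw [this]
      exact (hΘGdiff l a b).const_mul _)]
    refine Finset.sum_congr rfl fun l _ => ?_
    rw [md_smul _ (fun a b => hΘGdiff l a b)]
    congr 1
    rw [md_comp (fun u => Θ l u w0) G i hGdiff (fun a b => hΘfst l z0 hz0 w0 hw0 a b)]
    rfl
  rw [hL1, hmd]
  simp only [Matrix.mul_apply, Matrix.sum_apply, Matrix.smul_apply, smul_eq_mul,
    Matrix.kroneckerMap_apply, Matrix.transpose_apply, Fintype.sum_prod_type,
    Finset.sum_mul, Finset.mul_sum, hKey]
  conv_lhs => rw [Finset.sum_comm]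
  refine Finset.sum_congr rfl fun l _ => Finset.sum_congr rfl fun d _ => ?_
  refine Finset.sum_comm.trans ?_
  refine Finset.sum_congr rfl fun k _ => Finset.sum_congr rfl fun c _ => ?_
  ring
end

section
/- Let n, r ≥ 1, for 1 ≤ i, j ≤ n let 𝒦^{ij} ∈ M_r(ℂ), and let 𝒦 ∈ M_{nr}(ℂ) be the n×n block matrix with (i,j) block 𝒦^{ij}. (a) Suppose that for every k = (k₁,…,kₙ) ∈ ℂ^n with |k_i| = 1 for all i there exists an invertible J_k ∈ GL(r,ℂ) such that (diag(k₁,…,kₙ) ⊗ J_k) · 𝒦 = 𝒦 · (diag(k₁,…,kₙ) ⊗ J_k). Then 𝒦^{ij} is nilpotent whenever i ≠ j. (b) Suppose, in addition, that for every 1 ≤ i < n there exist k₁,…,kₙ ∈ ℂ with |k_j| = 1 for all j and an invertible J ∈ GL(r,ℂ) such that (P ⊗ J) · 𝒦 = 𝒦 · (P ⊗ J), where P ∈ M_n(ℂ) is the matrix with P_{i,i+1} = k_{i+1}, P_{i+1,i} = k_i, P_{jj} = k_j for j ∉ {i, i+1}, and all other entries zero. Then the diagonal blocks 𝒦^{11},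 𝒦^{22}, …, 𝒦^{nn} are all similar to one another. -/
open Matrix
open scoped Kronecker

section Aux

open Polynomial

/-- If `A` is "similar to `c • A`" for every unimodular `c`, then `A` is nilpotent. -/
private lemma keyNilp {r : ℕ} (A : Matrix (Fin r) (Fin r) ℂ)
    (h : ∀ c : ℂ, ‖c‖ = 1 → ∃ J : Matrix (Fin r) (Fin r) ℂ,
      IsUnit J ∧ J * A = c • (A * J)) :
    IsNilpotent A := by
  set f : Module.End ℂ (Fin r → ℂ) := Matrix.toLinAlgEquiv' A with hf
  have hA : A = Matrix.toLinAlgEquiv'.symm f := by simp [hf]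
  -- every eigenvalue of f is zero
  have heig : ∀ μ : ℂ, f.HasEigenvalue μ → μ = 0 := by
    intro μ hμ
    by_contra hμ0
    obtain ⟨v, hvmem, hv0⟩ := hμ.exists_hasEigenvector
    have hv : A.mulVec v = μ • v := by
      have := Module.End.mem_eigenspace_iff.mp hvmem
      simpa [hf, Matrix.toLinAlgEquiv'_apply] using this
    have key : ∀ x : ℝ, f.HasEigenvalue ((Complex.exp (x * Complex.I))⁻¹ * μ) := by
      intro x
      set c : ℂ := Complex.exp (x * Complex.I) with hc
      have hc1 : ‖c‖ = 1 := Complex.norm_exp_ofReal_mul_I x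
      have hc0 : c ≠ 0 := Complex.exp_ne_zero _
      obtain ⟨J, hJ, hcom⟩ := h c hc1
      set w : Fin r → ℂ := J.mulVec v with hw
      have hw0 : w ≠ 0 := by
        intro hw0
        apply hv0
        obtain ⟨u, hu⟩ := hJ
        have : (↑u⁻¹ : Matrix (Fin r) (Fin r) ℂ).mulVec w = v := by
          rw [hw, ← hu, Matrix.mulVec_mulVec, Units.inv_mul, Matrix.one_mulVec]
        rw [hw0, Matrix.mulVec_zero] at this
        exact this.symm
      have hAw : A.mulVec w = (c⁻¹ * μ) • w := by
        have h1 : J.mulVec (A.mulVec v) = c • (A.mulVec (J.mulVec v)) := by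
          rw [Matrix.mulVec_mulVec, Matrix.mulVec_mulVec, hcom, Matrix.smul_mulVec]
        rw [hv, Matrix.mulVec_smul] at h1
        have h2 : c⁻¹ • (μ • w) = c⁻¹ • (c • A.mulVec w) := by rw [hw, h1]
        rw [inv_smul_smul₀ hc0, smul_smul] at h2
        exact h2.symm
      exact Module.End.hasEigenvalue_of_hasEigenvector
        ⟨Module.End.mem_eigenspace_iff.mpr (by simpa [hf, Matrix.toLinAlgEquiv'_apply] using hAw),
         hw0⟩
    -- infinitely many eigenvalues, contradiction
    have hfin : Set.Finite (setOf f.HasEigenvalue) := Module.End.finite_hasEigenvalue f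
    have hinj : Set.InjOn (fun x : ℝ => (Complex.exp (x * Complex.I))⁻¹ * μ) (Set.Ioo 0 1) := by
      intro x hx y hy hxy
      simp only at hxy
      have h1 : Complex.exp (x * Complex.I) = Complex.exp (y * Complex.I) := by
        have := mul_right_cancel₀ hμ0 hxy
        exact inv_injective this
      obtain ⟨m, hm⟩ := Complex.exp_eq_exp_iff_exists_int.mp h1
      have him := congrArg Complex.im hm
      simp [Complex.add_im, Complex.mul_im, Complex.mul_re] at him
      have hm0 : m = 0 := by
        by_contra hmne
        have h1le : (1:ℝ) ≤ |(m:ℝ)| := by exact_mod_cast Int.one_le_abs (by omega)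
        have habs : |x - y| < 1 := abs_lt.mpr ⟨by linarith [hx.1, hx.2, hy.1, hy.2],
          by linarith [hx.1, hx.2, hy.1, hy.2]⟩
        have hxy' : x - y = (m:ℝ) * (2 * Real.pi) := by linarith [him]
        rw [hxy', abs_mul, abs_of_pos (by positivity : (0:ℝ) < 2 * Real.pi)] at habs
        nlinarith [Real.pi_gt_three]
      rw [hm0] at him
      simp at him
      linarith [him]
    have hsub : (fun x : ℝ => (Complex.exp (x * Complex.I))⁻¹ * μ) '' Set.Ioo 0 1 ⊆
        setOf f.HasEigenvalue := by
      rintro _ ⟨x, -, rfl⟩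
      exact key x
    exact ((hfin.subset hsub)).not_infinite ((Set.Ioo_infinite (by norm_num)).image hinj)
  -- the minimal polynomial is a power of X
  have hint : IsIntegral ℂ f := Algebra.IsIntegral.isIntegral f
  have hmon : (minpoly ℂ f).Monic := minpoly.monic hint
  have hsplit : (minpoly ℂ f).Splits := IsAlgClosed.splits _
  have hroots : ∀ a ∈ (minpoly ℂ f).roots, a = 0 := by
    intro a ha
    exact heig a (Module.End.hasEigenvalue_iff_isRoot.mpr ((Polynomial.mem_roots'.mp ha).2))
  have hX : minpoly ℂ f = X ^ Multiset.card (minpoly ℂ f).roots := by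
    conv_lhs => rw [hsplit.eq_prod_roots_of_monic hmon]
    rw [show (minpoly ℂ f).roots.map (fun a => X - C a)
        = Multiset.replicate (Multiset.card (minpoly ℂ f).roots) (X : ℂ[X]) from ?_,
      Multiset.prod_replicate]
    rw [Multiset.eq_replicate]
    refine ⟨Multiset.card_map _ _, ?_⟩
    rintro b hb
    obtain ⟨a, ha, rfl⟩ := Multiset.mem_map.mp hb
    rw [hroots a ha, map_zero, sub_zero]
  have hfnil : IsNilpotent f := by
    refine ⟨Multiset.card (minpoly ℂ f).roots, ?_⟩
    have := minpoly.aeval ℂ f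
    rw [hX, map_pow, Polynomial.aeval_X] at this
    exact this
  rw [hA]
  exact hfnil.map (Matrix.toLinAlgEquiv'.symm : _ ≃ₐ[ℂ] _)

/-- Extracting the block-level identity from a Kronecker-product intertwining relation. -/
private lemma blockEq {n r : ℕ} (Kb : Fin n → Fin n → Matrix (Fin r) (Fin r) ℂ)
    (A : Matrix (Fin n) (Fin n) ℂ) (J : Matrix (Fin r) (Fin r) ℂ)
    (h : (A ⊗ₖ J) * (Matrix.of fun p q : Fin n × Fin r => Kb p.1 q.1 p.2 q.2)
       = (Matrix.of fun p q : Fin n × Fin r => Kb p.1 q.1 p.2 q.2) * (A ⊗ₖ J))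
    (i j : Fin n) (a b : Fin r) :
    ∑ l, A i l * (J * Kb l j) a b = ∑ l, A l j * (Kb i l * J) a b := by
  have h' : ((A ⊗ₖ J) * (Matrix.of fun p q : Fin n × Fin r => Kb p.1 q.1 p.2 q.2)) (i, a) (j, b)
      = ((Matrix.of fun p q : Fin n × Fin r => Kb p.1 q.1 p.2 q.2) * (A ⊗ₖ J)) (i, a) (j, b) := by
    rw [h]
  simp only [Matrix.mul_apply, Fintype.sum_prod_type, Matrix.kroneckerMap_apply,
    Matrix.of_apply] at h'
  calc ∑ l, A i l * (J * Kb l j) a b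
      = ∑ l, ∑ e, A i l * J a e * Kb l j e b := by
        simp only [Matrix.mul_apply, Finset.mul_sum, mul_assoc]
    _ = ∑ l, ∑ e, Kb i l a e * (A l j * J e b) := h'
    _ = ∑ l, A l j * (Kb i l * J) a b := by
        simp only [Matrix.mul_apply, Finset.mul_sum]
        congr 1; ext l; congr 1; ext e; ring

end Aux

/-- The matrix `P` arising from the coordinate-swapping automorphism: `P_{i,i'} = k i'`,
`P_{i',i} = k i`, `P_{jj} = k j` for `j ∉ {i,i'}`, and all other entries `0`. -/
noncomputable def swapMat {n : ℕ} (k : Fin n → ℂ) (i i' : Fin n) :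
    Matrix (Fin n) (Fin n) ℂ :=
  Matrix.of fun a b =>
    if a = i ∧ b = i' then k i'
    else if a = i' ∧ b = i then k i
    else if a = b ∧ a ≠ i ∧ a ≠ i' then k a
    else 0

/-- (a) If the block matrix `𝒦` commutes with `diag(k) ⊗ J_k` for all
unimodular `k`, the off-diagonal blocks are nilpotent.  (b) If moreover `𝒦` commutes with
suitable swap matrices `P ⊗ J`, all diagonal blocks are mutually similar. -/
theorem statement2 {n r : ℕ} (hn : 1 ≤ n) (hr : 1 ≤ r)
    (Kb : Fin n → Fin n → Matrix (Fin r) (Fin r) ℂ)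
    (K : Matrix (Fin n × Fin r) (Fin n × Fin r) ℂ)
    (hK : K = Matrix.of fun p q => Kb p.1 q.1 p.2 q.2)
    (ha : ∀ k : Fin n → ℂ, (∀ i, ‖k i‖ = 1) →
      ∃ Jk : Matrix (Fin r) (Fin r) ℂ, IsUnit Jk ∧
        ((Matrix.diagonal k) ⊗ₖ Jk) * K = K * ((Matrix.diagonal k) ⊗ₖ Jk)) :
    (∀ i j : Fin n, i ≠ j → IsNilpotent (Kb i j)) ∧
    ((∀ i i' : Fin n, (i : ℕ) + 1 = (i' : ℕ) →
        ∃ k : Fin n → ℂ, (∀ j, ‖k j‖ = 1) ∧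
          ∃ Jm : Matrix (Fin r) (Fin r) ℂ, IsUnit Jm ∧
            ((swapMat k i i') ⊗ₖ Jm) * K = K * ((swapMat k i i') ⊗ₖ Jm)) →
      ∀ i j : Fin n, ∃ S : Matrix (Fin r) (Fin r) ℂ,
        IsUnit S ∧ S * Kb i i = Kb j j * S) := by
  subst hK
  constructor
  · -- part (a)
    intro i j hij
    apply keyNilp
    intro c hc
    set k : Fin n → ℂ := fun l => if l = j then c else 1 with hk
    have hk1 : ∀ l, ‖k l‖ = 1 := by
      intro l; by_cases h : l = j <;> simp [hk, h, hc]
    obtain ⟨J, hJ, hcom⟩ := ha k hk1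
    refine ⟨J, hJ, ?_⟩
    have hbe := blockEq Kb (Matrix.diagonal k) J hcom i j
    ext a b
    have hthis := hbe a b
    simp only [Matrix.diagonal_apply, ite_mul, zero_mul, Finset.sum_ite_eq, Finset.sum_ite_eq',
      Finset.mem_univ, if_true] at hthis
    have hki : k i = 1 := by simp [hk, hij]
    have hkj : k j = c := by simp [hk]
    rw [hki, hkj, one_mul] at hthis
    simpa using hthis
  · -- part (b)
    intro hb i j
    have hadj : ∀ i i' : Fin n, (i : ℕ) + 1 = (i' : ℕ) →
        ∃ J : Matrix (Fin r) (Fin r) ℂ, IsUnit J ∧ J * Kb i' i' = Kb i i * J := by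
      intro i i' hii
      obtain ⟨k, hk, J, hJu, hcom⟩ := hb i i' hii
      have hne : i ≠ i' := by
        intro h; rw [h] at hii; omega
      have hP1 : ∀ l, swapMat k i i' i l = if l = i' then k i' else 0 := by
        intro l; simp [swapMat, hne]
      have hP2 : ∀ l, swapMat k i i' l i' = if l = i then k i' else 0 := by
        intro l
        by_cases h1 : l = i
        · simp [swapMat, h1, hne]
        · by_cases h2 : l = i'
          · simp [swapMat, h1, h2, hne, Ne.symm hne]
          · simp [swapMat, h1, h2]
      have hbe := blockEq Kb (swapMat k i i') J hcom i i'
      have hki' : k i' ≠ 0 := by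
        intro h
        have := hk i'
        rw [h] at this
        simp at this
      refine ⟨J, hJu, ?_⟩
      ext a b
      have hthis := hbe a b
      simp only [hP1, hP2, ite_mul, zero_mul, Finset.sum_ite_eq, Finset.sum_ite_eq',
        Finset.mem_univ, if_true] at hthis
      exact mul_left_cancel₀ hki' hthis
    have h0 : 0 < n := hn
    have claim : ∀ m (hm : m < n), ∃ S : Matrix (Fin r) (Fin r) ℂ, IsUnit S ∧
        S * Kb ⟨m, hm⟩ ⟨m, hm⟩ = Kb ⟨0, h0⟩ ⟨0, h0⟩ * S := by
      intro m
      induction m with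
      | zero => intro hm; exact ⟨1, isUnit_one, by rw [one_mul, mul_one]⟩
      | succ p ih =>
        intro hm
        have hp : p < n := Nat.lt_of_succ_lt hm
        obtain ⟨S, hSu, hS⟩ := ih hp
        obtain ⟨J, hJu, hJ⟩ := hadj ⟨p, hp⟩ ⟨p + 1, hm⟩ rfl
        exact ⟨S * J, hSu.mul hJu, by rw [mul_assoc, hJ, ← mul_assoc, hS, mul_assoc]⟩
    obtain ⟨Si, hSiu, hSi⟩ := claim i.1 i.isLt
    obtain ⟨Sj, hSju, hSj⟩ := claim j.1 j.isLt
    simp only [Fin.eta] at hSi hSj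
    obtain ⟨uj, rfl⟩ := hSju
    refine ⟨(↑uj⁻¹ : Matrix (Fin r) (Fin r) ℂ) * Si, (Units.isUnit uj⁻¹).mul hSiu, ?_⟩
    have hj' : (↑uj⁻¹ : Matrix (Fin r) (Fin r) ℂ) * Kb ⟨0, h0⟩ ⟨0, h0⟩
        = Kb j j * (↑uj⁻¹ : Matrix (Fin r) (Fin r) ℂ) := by
      calc (↑uj⁻¹ : Matrix (Fin r) (Fin r) ℂ) * Kb ⟨0, h0⟩ ⟨0, h0⟩
          = ↑uj⁻¹ * Kb ⟨0, h0⟩ ⟨0, h0⟩ * (↑uj * ↑uj⁻¹) := by rw [Units.mul_inv, mul_one]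
        _ = ↑uj⁻¹ * (Kb ⟨0, h0⟩ ⟨0, h0⟩ * ↑uj) * ↑uj⁻¹ := by simp only [mul_assoc]
        _ = ↑uj⁻¹ * (↑uj * Kb j j) * ↑uj⁻¹ := by rw [hSj]
        _ = Kb j j * ↑uj⁻¹ := by rw [← mul_assoc, Units.inv_mul, one_mul]
    rw [mul_assoc, hSi, ← mul_assoc, hj', mul_assoc]
end

section
/- Let H₁, H₂, Y₁, Y₂ be a multiplicity-free representation of 𝔟² on ℂ^r. Suppose (λ, μ), (λ−1, μ), (λ, μ−1) and (λ−1, μ−1) are all joint eigenvalues of (H₁, H₂), and let V_{(a,b)} denote the joint eigenspace for the joint eigenvalue (a,b). Then: ( Y₁(V_{(λ,μ)}) = {0} or Y₂(V_{(λ−1,μ)}) = {0} ) if and only if ( Y₁(V_{(λ,μ−1)}) = {0} or Y₂(V_{(λ,μ)}) = {0} ). -/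
open Module

private lemma key3 {r : ℕ} (A B : Module.End ℂ (Fin r → ℂ))
    (P Q : Submodule ℂ (Fin r → ℂ))
    (hAP : ∀ v ∈ P, A v ∈ Q)
    (hQ : Module.finrank ℂ Q ≤ 1) :
    (Submodule.map A P = ⊥ ∨ Submodule.map B Q = ⊥) ↔ ∀ v ∈ P, B (A v) = 0 := by
  constructor
  · rintro (h | h) v hv
    · have hm : A v ∈ Submodule.map A P := ⟨v, hv, rfl⟩
      rw [h, Submodule.mem_bot] at hm
      simp [hm]
    · have hm : B (A v) ∈ Submodule.map B Q := ⟨A v, hAP v hv, rfl⟩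
      rwa [h, Submodule.mem_bot] at hm
  · intro h
    by_cases hA : Submodule.map A P = ⊥
    · exact Or.inl hA
    right
    obtain ⟨w, hwmem, hw⟩ := Submodule.ne_bot_iff _ |>.mp hA
    obtain ⟨v, hv, rfl⟩ := hwmem
    have hspan : Submodule.span ℂ {A v} = Q := by
      apply Submodule.eq_of_le_of_finrank_le
      · simpa [Submodule.span_le, Set.singleton_subset_iff] using hAP v hv
      · rwa [finrank_span_singleton hw]
    rw [Submodule.eq_bot_iff]
    rintro x ⟨q, hq, rfl⟩
    rw [← hspan] at hq
    obtain ⟨c, rfl⟩ := Submodule.mem_span_singleton.mp hq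
    simp [map_smul, h v hv]

/-- For a multiplicity-free representation `H₁,H₂,Y₁,Y₂` of `𝔟²` on `ℂʳ`,
with joint eigenvalues `(λ,μ)`, `(λ−1,μ)`, `(λ,μ−1)`, `(λ−1,μ−1)`, one has
`Y₁(V_{(λ,μ)}) = 0 ∨ Y₂(V_{(λ−1,μ)}) = 0` iff `Y₁(V_{(λ,μ−1)}) = 0 ∨ Y₂(V_{(λ,μ)}) = 0`. -/
theorem statement3 {r : ℕ} (H₁ H₂ Y₁ Y₂ : Module.End ℂ (Fin r → ℂ))
    (hHH : Commute H₁ H₂) (hYY : Commute Y₁ Y₂)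
    (hH₁Y₂ : Commute H₁ Y₂) (hH₂Y₁ : Commute H₂ Y₁)
    (hrel₁ : H₁ * Y₁ - Y₁ * H₁ = -Y₁) (hrel₂ : H₂ * Y₂ - Y₂ * H₂ = -Y₂)
    (hdiag₁ : (⨆ μ : ℂ, Module.End.eigenspace H₁ μ) = ⊤)
    (hdiag₂ : (⨆ μ : ℂ, Module.End.eigenspace H₂ μ) = ⊤)
    (hmf : ∀ a b : ℂ, Module.finrank ℂ
      ↥(Module.End.eigenspace H₁ a ⊓ Module.End.eigenspace H₂ b) ≤ 1)
    (lam mu : ℂ)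
    (V : ℂ → ℂ → Submodule ℂ (Fin r → ℂ))
    (hV : ∀ a b : ℂ, V a b = Module.End.eigenspace H₁ a ⊓ Module.End.eigenspace H₂ b)
    (h00 : V lam mu ≠ ⊥) (h10 : V (lam - 1) mu ≠ ⊥)
    (h01 : V lam (mu - 1) ≠ ⊥) (h11 : V (lam - 1) (mu - 1) ≠ ⊥) :
    (Submodule.map Y₁ (V lam mu) = ⊥ ∨ Submodule.map Y₂ (V (lam - 1) mu) = ⊥) ↔
      (Submodule.map Y₁ (V lam (mu - 1)) = ⊥ ∨ Submodule.map Y₂ (V lam mu) = ⊥) := by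
  have hmap1 : ∀ a b : ℂ, ∀ v ∈ V a b, Y₁ v ∈ V (a - 1) b := by
    intro a b v hv
    rw [hV, Submodule.mem_inf] at hv ⊢
    obtain ⟨h1, h2⟩ := hv
    rw [Module.End.mem_eigenspace_iff] at h1 h2
    have e1 := LinearMap.congr_fun hrel₁ v
    simp only [LinearMap.sub_apply, LinearMap.neg_apply, Module.End.mul_apply] at e1
    have e2 := LinearMap.congr_fun hH₂Y₁.eq v
    simp only [Module.End.mul_apply] at e2
    constructor
    · rw [Module.End.mem_eigenspace_iff]
      have : H₁ (Y₁ v) = Y₁ (H₁ v) - Y₁ v := by linear_combination (norm := module) e1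
      rw [this, h1, map_smul, sub_smul, one_smul]
    · rw [Module.End.mem_eigenspace_iff]
      rw [e2, h2, map_smul]
  have hmap2 : ∀ a b : ℂ, ∀ v ∈ V a b, Y₂ v ∈ V a (b - 1) := by
    intro a b v hv
    rw [hV, Submodule.mem_inf] at hv ⊢
    obtain ⟨h1, h2⟩ := hv
    rw [Module.End.mem_eigenspace_iff] at h1 h2
    have e1 := LinearMap.congr_fun hrel₂ v
    simp only [LinearMap.sub_apply, LinearMap.neg_apply, Module.End.mul_apply] at e1
    have e2 := LinearMap.congr_fun hH₁Y₂.eq v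
    simp only [Module.End.mul_apply] at e2
    constructor
    · rw [Module.End.mem_eigenspace_iff]
      rw [e2, h1, map_smul]
    · rw [Module.End.mem_eigenspace_iff]
      have : H₂ (Y₂ v) = Y₂ (H₂ v) - Y₂ v := by linear_combination (norm := module) e1
      rw [this, h2, map_smul, sub_smul, one_smul]
  have hQ1 : Module.finrank ℂ (V (lam - 1) mu) ≤ 1 := by rw [hV]; exact hmf _ _
  have hQ2 : Module.finrank ℂ (V lam (mu - 1)) ≤ 1 := by rw [hV]; exact hmf _ _
  rw [key3 Y₁ Y₂ (V lam mu) (V (lam - 1) mu) (hmap1 lam mu) hQ1]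
  rw [or_comm, key3 Y₂ Y₁ (V lam mu) (V lam (mu - 1)) (hmap2 lam mu) hQ2]
  constructor <;> intro h v hv
  · rw [← Module.End.mul_apply, hYY.eq, Module.End.mul_apply]; exact h v hv
  · rw [← Module.End.mul_apply, ← hYY.eq, Module.End.mul_apply]; exact h v hv
end

section
/- Let H₁, H₂, Y₁, Y₂ be a multiplicity-free representation of 𝔟² on ℂ^r, where each H_i is diagonalizable with all eigenvalues real. Suppose for some i ∈ {1,2} that α < β are eigenvalues of H_i such that no x ∈ ℝ with α < x < β is an eigenvalue of H_i, and that β − α ≠ 1. Then the representation is decomposable, i.e., ℂ^r = W₁ ⊕ W₂ for two nonzero subspaces W₁, W₂ each invariant under H₁, H₂, Y₁ and Y₂. -/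
open Module.End

/-- A subspace invariant under all four operators of a representation of `𝔟²`. -/
def InvariantB2 {r : ℕ} (H₁ H₂ Y₁ Y₂ : Module.End ℂ (Fin r → ℂ))
    (W : Submodule ℂ (Fin r → ℂ)) : Prop :=
  (∀ x ∈ W, H₁ x ∈ W) ∧ (∀ x ∈ W, H₂ x ∈ W) ∧ (∀ x ∈ W, Y₁ x ∈ W) ∧ (∀ x ∈ W, Y₂ x ∈ W)

/-- biSups of an independent family over disjoint index sets are disjoint. -/
lemma biSup_disjoint_biSup_of_iSupIndep {ι R N : Type*} [Ring R] [AddCommGroup N]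
    [Module R N] {p : ι → Submodule R N} (hp : iSupIndep p) {S T : Set ι}
    (hST : ∀ i, i ∈ S → i ∉ T) :
    Disjoint (⨆ i ∈ S, p i) (⨆ i ∈ T, p i) := by
  classical
  rw [Submodule.disjoint_def]
  intro x hxS hxT
  rw [Submodule.mem_biSup_iff_exists_dfinsupp] at hxS hxT
  obtain ⟨f, hf⟩ := hxS
  obtain ⟨g, hg⟩ := hxT
  have heq : f.filter (· ∈ S) = g.filter (· ∈ T) :=
    hp.dfinsupp_lsum_injective (hf.trans hg.symm)
  have hzero : f.filter (· ∈ S) = 0 := by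
    ext i
    by_cases hi : i ∈ S
    · have h1 : (f.filter (· ∈ S)) i = (g.filter (· ∈ T)) i := by rw [heq]
      rw [DFinsupp.filter_apply_pos _ hi, DFinsupp.filter_apply_neg _ (hST i hi)] at h1
      rw [DFinsupp.filter_apply_pos _ hi, h1, DFinsupp.zero_apply]
    · rw [DFinsupp.filter_apply_neg _ hi, DFinsupp.zero_apply]
  rw [← hf, hzero, map_zero]

section construct

variable {r : ℕ} (Hi Yi A B C : Module.End ℂ (Fin r → ℂ))

/-- If `A` commutes with `Hi` then `A` preserves eigenspaces of `Hi`. -/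
lemma commute_preserves_eigenspace {A : Module.End ℂ (Fin r → ℂ)}
    (hA : Commute Hi A) {μ : ℂ} {v : Fin r → ℂ} (hv : v ∈ Hi.eigenspace μ) :
    A v ∈ Hi.eigenspace μ := by
  rw [mem_eigenspace_iff] at hv ⊢
  calc Hi (A v) = (Hi * A) v := rfl
    _ = (A * Hi) v := by rw [hA.eq]
    _ = A (Hi v) := rfl
    _ = μ • A v := by rw [hv, map_smul]

/-- `Yi` shifts the `Hi`-eigenvalue down by 1. -/
lemma Yi_shifts_eigenspace (hrel : Hi * Yi - Yi * Hi = -Yi)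
    {μ : ℂ} {v : Fin r → ℂ} (hv : v ∈ Hi.eigenspace μ) :
    Yi v ∈ Hi.eigenspace (μ - 1) := by
  rw [mem_eigenspace_iff] at hv ⊢
  have h : Hi * Yi = Yi * Hi - Yi := by
    have h2 : Hi * Yi = -Yi + Yi * Hi := sub_eq_iff_eq_add.mp hrel
    rw [h2]; abel
  calc Hi (Yi v) = (Hi * Yi) v := rfl
    _ = (Yi * Hi - Yi) v := by rw [h]
    _ = Yi (Hi v) - Yi v := rfl
    _ = (μ - 1) • Yi v := by rw [hv, map_smul, sub_smul, one_smul]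

lemma construct
    (hA : Commute Hi A) (hB : Commute Hi B) (hC : Commute Hi C)
    (hrel : Hi * Yi - Yi * Hi = -Yi)
    (hdiag : (⨆ μ : ℂ, Module.End.eigenspace Hi μ) = ⊤)
    (T₁ T₂ : Set ℂ)
    (hdisj : ∀ μ, μ ∈ T₁ → μ ∉ T₂)
    (hcover : ∀ μ, Hi.HasEigenvalue μ → μ ∈ T₁ ∨ μ ∈ T₂)
    (hT₁ : ∃ μ ∈ T₁, Hi.HasEigenvalue μ)
    (hT₂ : ∃ μ ∈ T₂, Hi.HasEigenvalue μ)
    (hcl₁ : ∀ μ ∈ T₁, Hi.HasEigenvalue (μ - 1) → μ - 1 ∈ T₁)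
    (hcl₂ : ∀ μ ∈ T₂, Hi.HasEigenvalue (μ - 1) → μ - 1 ∈ T₂) :
    ∃ W₁ W₂ : Submodule ℂ (Fin r → ℂ), W₁ ≠ ⊥ ∧ W₂ ≠ ⊥ ∧ IsCompl W₁ W₂ ∧
      ((∀ x ∈ W₁, A x ∈ W₁) ∧ (∀ x ∈ W₁, B x ∈ W₁) ∧ (∀ x ∈ W₁, C x ∈ W₁) ∧
        (∀ x ∈ W₁, Yi x ∈ W₁)) ∧
      ((∀ x ∈ W₂, A x ∈ W₂) ∧ (∀ x ∈ W₂, B x ∈ W₂) ∧ (∀ x ∈ W₂, C x ∈ W₂) ∧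
        (∀ x ∈ W₂, Yi x ∈ W₂)) := by
  set E := Hi.eigenspace with hE
  set W : Set ℂ → Submodule ℂ (Fin r → ℂ) := fun T => ⨆ μ ∈ T, E μ with hW
  -- nonemptiness
  have hne : ∀ (T : Set ℂ), (∃ μ ∈ T, Hi.HasEigenvalue μ) → W T ≠ ⊥ := by
    rintro T ⟨μ, hμT, hμ⟩ hbot
    refine hμ ?_
    have hle : E μ ≤ W T := le_biSup _ hμT
    rw [hbot, le_bot_iff] at hle
    exact hle
  -- invariance under operators commuting with Hi
  have hinv : ∀ (T : Set ℂ) (D : Module.End ℂ (Fin r → ℂ)), Commute Hi D →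
      ∀ x ∈ W T, D x ∈ W T := by
    intro T D hD
    have : W T ≤ Submodule.comap D (W T) := by
      refine iSup₂_le fun μ hμ => fun v hv => ?_
      exact (le_biSup _ hμ : E μ ≤ W T) (commute_preserves_eigenspace Hi hD hv)
    exact fun x hx => this hx
  -- invariance under Yi
  have hinvY : ∀ (T : Set ℂ), (∀ μ ∈ T, Hi.HasEigenvalue (μ - 1) → μ - 1 ∈ T) →
      ∀ x ∈ W T, Yi x ∈ W T := by
    intro T hcl
    have : W T ≤ Submodule.comap Yi (W T) := by
      refine iSup₂_le fun μ hμ => fun v hv => ?_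
      have hYv : Yi v ∈ E (μ - 1) := Yi_shifts_eigenspace Hi Yi hrel hv
      by_cases h0 : Yi v = 0
      · simpa [h0] using (W T).zero_mem
      · have hev : Hi.HasEigenvalue (μ - 1) :=
          hasEigenvalue_of_hasEigenvector ⟨hYv, h0⟩
        exact (le_biSup _ (hcl μ hμ hev) : E (μ - 1) ≤ W T) hYv
    exact fun x hx => this hx
  refine ⟨W T₁, W T₂, hne T₁ hT₁, hne T₂ hT₂, ⟨?_, ?_⟩, ?_, ?_⟩
  · exact biSup_disjoint_biSup_of_iSupIndep (Hi.eigenspaces_iSupIndep) hdisj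
  · rw [codisjoint_iff, ← top_le_iff, ← hdiag]
    refine iSup_le fun μ => ?_
    by_cases hμ : Hi.HasEigenvalue μ
    · rcases hcover μ hμ with h | h
      · exact le_sup_of_le_left (le_biSup _ h)
      · exact le_sup_of_le_right (le_biSup _ h)
    · rw [hasEigenvalue_iff, not_ne_iff] at hμ
      have hbot : E μ = ⊥ := hμ
      rw [hbot]
      exact bot_le
  · exact ⟨hinv T₁ A hA, hinv T₁ B hB, hinv T₁ C hC, hinvY T₁ hcl₁⟩
  · exact ⟨hinv T₂ A hA, hinv T₂ B hB, hinv T₂ C hC, hinvY T₂ hcl₂⟩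

lemma key
    (hA : Commute Hi A) (hB : Commute Hi B) (hC : Commute Hi C)
    (hrel : Hi * Yi - Yi * Hi = -Yi)
    (hdiag : (⨆ μ : ℂ, Module.End.eigenspace Hi μ) = ⊤)
    (hreal : ∀ μ : ℂ, Hi.HasEigenvalue μ → ∃ x : ℝ, μ = (x : ℂ))
    (α β : ℝ) (hαβ : α < β)
    (hα : Hi.HasEigenvalue (α : ℂ)) (hβ : Hi.HasEigenvalue (β : ℂ))
    (hgap : ∀ x : ℝ, α < x → x < β → ¬ Hi.HasEigenvalue (x : ℂ))
    (hne : β - α ≠ 1) :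
    ∃ W₁ W₂ : Submodule ℂ (Fin r → ℂ), W₁ ≠ ⊥ ∧ W₂ ≠ ⊥ ∧ IsCompl W₁ W₂ ∧
      ((∀ x ∈ W₁, A x ∈ W₁) ∧ (∀ x ∈ W₁, B x ∈ W₁) ∧ (∀ x ∈ W₁, C x ∈ W₁) ∧
        (∀ x ∈ W₁, Yi x ∈ W₁)) ∧
      ((∀ x ∈ W₂, A x ∈ W₂) ∧ (∀ x ∈ W₂, B x ∈ W₂) ∧ (∀ x ∈ W₂, C x ∈ W₂) ∧
        (∀ x ∈ W₂, Yi x ∈ W₂)) := by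
  rcases lt_or_gt_of_ne hne with hlt | hgt
  · -- β - α < 1 : split by integer-translates of α
    set T₁ : Set ℂ := {μ | ∃ n : ℤ, μ = (α : ℂ) + n} with hT₁def
    refine construct Hi Yi A B C hA hB hC hrel hdiag T₁ T₁ᶜ
      (fun μ h₁ h₂ => h₂ h₁) (fun μ _ => or_not_of_imp fun h => h) ⟨(α : ℂ), ⟨0, by simp⟩, hα⟩
      ⟨(β : ℂ), ?_, hβ⟩ ?_ ?_
    · -- β ∉ T₁
      rintro ⟨n, hn⟩
      have hn' : β = α + (n : ℝ) := by
        have := congrArg Complex.re hn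
        simpa using this
      have h0 : (0 : ℝ) < (n : ℝ) := by linarith
      have h1 : (n : ℝ) < 1 := by linarith
      have h2 : (0 : ℤ) < n := by exact_mod_cast h0
      have h3 : (1 : ℤ) ≤ n := h2
      have h4 : (1 : ℝ) ≤ (n : ℝ) := by exact_mod_cast h3
      linarith
    · rintro μ ⟨n, hn⟩ _
      refine ⟨n - 1, ?_⟩
      rw [hn]; push_cast; ring
    · rintro μ hμ _ ⟨n, hn⟩
      refine hμ ⟨n + 1, ?_⟩
      have h5 : μ = (α : ℂ) + (n : ℂ) + 1 := by rw [← hn]; ring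
      rw [h5]; push_cast; ring
  · -- 1 < β - α : split at the gap
    refine construct Hi Yi A B C hA hB hC hrel hdiag
      {μ | ∃ x : ℝ, μ = (x : ℂ) ∧ x ≤ α} {μ | ∃ x : ℝ, μ = (x : ℂ) ∧ β ≤ x}
      ?_ ?_ ⟨(α : ℂ), ⟨α, rfl, le_rfl⟩, hα⟩ ⟨(β : ℂ), ⟨β, rfl, le_rfl⟩, hβ⟩ ?_ ?_
    · rintro μ ⟨x, rfl, hx⟩ ⟨y, hy, hy'⟩
      have : x = y := by exact_mod_cast hy
      subst this
      linarith
    · intro μ hμ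
      obtain ⟨x, rfl⟩ := hreal μ hμ
      rcases le_or_gt x α with h | h
      · exact Or.inl ⟨x, rfl, h⟩
      rcases le_or_gt β x with h' | h'
      · exact Or.inr ⟨x, rfl, h'⟩
      · exact absurd hμ (hgap x h h')
    · rintro μ ⟨x, rfl, hx⟩ _
      exact ⟨x - 1, by push_cast; ring, by linarith⟩
    · rintro μ ⟨x, rfl, hx⟩ hev
      have hcast : (x : ℂ) - 1 = ((x - 1 : ℝ) : ℂ) := by push_cast; ring
      refine ⟨x - 1, hcast, ?_⟩
      by_contra h
      push_neg at h
      refine hgap (x - 1) (by linarith) h ?_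
      rwa [← hcast]

end construct

/-- A multiplicity-free representation of `𝔟²` on `ℂʳ` with real
eigenvalues having a spectral gap `β − α ≠ 1` between consecutive eigenvalues of some `H_i`
is decomposable. -/
theorem statement4 {r : ℕ} (H₁ H₂ Y₁ Y₂ : Module.End ℂ (Fin r → ℂ))
    (hHH : Commute H₁ H₂) (hYY : Commute Y₁ Y₂)
    (hH₁Y₂ : Commute H₁ Y₂) (hH₂Y₁ : Commute H₂ Y₁)
    (hrel₁ : H₁ * Y₁ - Y₁ * H₁ = -Y₁) (hrel₂ : H₂ * Y₂ - Y₂ * H₂ = -Y₂)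
    (hdiag₁ : (⨆ μ : ℂ, Module.End.eigenspace H₁ μ) = ⊤)
    (hdiag₂ : (⨆ μ : ℂ, Module.End.eigenspace H₂ μ) = ⊤)
    (hreal₁ : ∀ μ : ℂ, Module.End.HasEigenvalue H₁ μ → ∃ x : ℝ, μ = (x : ℂ))
    (hreal₂ : ∀ μ : ℂ, Module.End.HasEigenvalue H₂ μ → ∃ x : ℝ, μ = (x : ℂ))
    (hmf : ∀ a b : ℂ, Module.finrank ℂ
      ↥(Module.End.eigenspace H₁ a ⊓ Module.End.eigenspace H₂ b) ≤ 1)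
    (Hi : Module.End ℂ (Fin r → ℂ)) (hi : Hi = H₁ ∨ Hi = H₂)
    (α β : ℝ) (hαβ : α < β)
    (hα : Module.End.HasEigenvalue Hi (α : ℂ))
    (hβ : Module.End.HasEigenvalue Hi (β : ℂ))
    (hgap : ∀ x : ℝ, α < x → x < β → ¬ Module.End.HasEigenvalue Hi (x : ℂ))
    (hne : β - α ≠ 1) :
    ∃ W₁ W₂ : Submodule ℂ (Fin r → ℂ), W₁ ≠ ⊥ ∧ W₂ ≠ ⊥ ∧ IsCompl W₁ W₂ ∧
      InvariantB2 H₁ H₂ Y₁ Y₂ W₁ ∧ InvariantB2 H₁ H₂ Y₁ Y₂ W₂ := by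
  rcases hi with rfl | rfl
  · obtain ⟨W₁, W₂, h1, h2, h3, ⟨a1, b1, c1, y1⟩, ⟨a2, b2, c2, y2⟩⟩ :=
      key Hi Y₁ Hi H₂ Y₂ (Commute.refl Hi) hHH hH₁Y₂ hrel₁ hdiag₁ hreal₁ α β hαβ hα hβ hgap hne
    exact ⟨W₁, W₂, h1, h2, h3, ⟨a1, b1, y1, c1⟩, ⟨a2, b2, y2, c2⟩⟩
  · obtain ⟨W₁, W₂, h1, h2, h3, ⟨a1, b1, c1, y1⟩, ⟨a2, b2, c2, y2⟩⟩ :=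
      key Hi Y₂ H₁ Hi Y₁ hHH.symm (Commute.refl Hi) hH₂Y₁ hrel₂ hdiag₂ hreal₂ α β hαβ hα hβ hgap hne
    exact ⟨W₁, W₂, h1, h2, h3, ⟨a1, b1, c1, y1⟩, ⟨a2, b2, c2, y2⟩⟩
end

section
/- Let H₁, H₂, Y₁, Y₂ be a multiplicity-free representation of 𝔟² on ℂ^r such that the set of eigenvalues of H₁ is exactly {λ₁, λ₁−1, …, λ₁−s} and the set of eigenvalues of H₂ is exactly {λ₂, λ₂−1, …, λ₂−t}, for some λ₁, λ₂ ∈ ℝ and integers s, t ≥ 0. Let S := {(i,j) ∈ {0,…,s}×{0,…,t} : (λ₁−i, λ₂−j) is a joint eigenvalue of (H₁,H₂)}, and for θ = (i,j) ∈ S let V_θ denote the (one-dimensional) joint eigenspace for (λ₁−i, λ₂−j). Consider the conditions: (P1) if (i,j₁) ∈ S and (i,j₂) ∈ S and j₁ ≤ j ≤ j₂, then (i,j) ∈ S; (P2) if (i₁,j) ∈ S and (i₂,j) ∈ S and i₁ ≤ i ≤ i₂, then (i,j) ∈ S; (P3) for every 0 ≤ i < s there exists j with (i,j) ∈ S and (i+1,j)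 ∈ S; (P4) whenever θ ∈ S and θ + ε₁ ∈ S then Y₁(V_θ) = V_{θ+ε₁}, and whenever θ ∈ S and θ + ε₂ ∈ S then Y₂(V_θ) = V_{θ+ε₂}, where ε₁ = (1,0), ε₂ = (0,1). Then the representation is indecomposable if and only if P1, P2, P3 and P4 all hold. -/
section Wall

variable (E₁ E₂ : ℕ → ℕ → Prop)

lemma wall_up (hsq : ∀ i j, (E₁ i j ∧ E₂ (i+1) j) ↔ (E₂ i j ∧ E₁ i (j+1))) :
    ∀ j m : ℕ, ∃ k, (m = 0 ∨ ¬ E₁ (m-1) j) →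
      (k ≤ m ∧ (k = 0 ∨ ¬ E₁ (k-1) (j+1)) ∧ ∀ i, k ≤ i → i < m → ¬ E₂ i j) := by
  intro j m
  by_cases hm : m = 0 ∨ ¬ E₁ (m-1) j
  · suffices h : ∀ k, k ≤ m → (∀ i, k ≤ i → i < m → ¬ E₂ i j) →
        ∃ k', k' ≤ m ∧ (k' = 0 ∨ ¬ E₁ (k'-1) (j+1)) ∧ ∀ i, k' ≤ i → i < m → ¬ E₂ i j by
      obtain ⟨k', h1, h2, h3⟩ := h m le_rfl (fun i h1 h2 => absurd h2 (by omega))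
      exact ⟨k', fun _ => ⟨h1, h2, h3⟩⟩
    intro k
    induction k with
    | zero => exact fun _ hQ => ⟨0, Nat.zero_le m, Or.inl rfl, hQ⟩
    | succ k ih =>
      intro hkm hQ
      by_cases hE : E₁ k (j+1)
      · have hnE₂ : ¬ E₂ k j := by
          intro hE₂
          obtain ⟨hE₁kj, hE₂k1⟩ := (hsq k j).mpr ⟨hE₂, hE⟩
          rcases Nat.lt_or_ge (k+1) m with hlt | hge
          · exact hQ (k+1) le_rfl hlt hE₂k1
          · have hkm' : k + 1 = m := by omega
            rcases hm with h0 | hnE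
            · omega
            · have : m - 1 = k := by omega
              rw [this] at hnE; exact hnE hE₁kj
        refine ih (by omega) ?_
        intro i h1 h2
        rcases Nat.eq_or_lt_of_le h1 with h | hlt
        · rw [← h]; exact hnE₂
        · exact hQ i hlt h2
      · exact ⟨k+1, hkm, Or.inr (by simpa using hE), hQ⟩
  · exact ⟨0, fun h => absurd h hm⟩

lemma wall_down (s : ℕ)
    (hsq : ∀ i j, (E₁ i j ∧ E₂ (i+1) j) ↔ (E₂ i j ∧ E₁ i (j+1)))
    (hbd : ∀ i j, E₁ i j → i < s) :
    ∀ j m' : ℕ, ∃ m, (m' = 0 ∨ ¬ E₁ (m'-1) (j+1)) →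
      (m' ≤ m ∧ (m = 0 ∨ ¬ E₁ (m-1) j) ∧ ∀ i, m' ≤ i → i < m → ¬ E₂ i j) := by
  intro j m'
  by_cases hm' : m' = 0 ∨ ¬ E₁ (m'-1) (j+1)
  · suffices h : ∀ q m, m' ≤ m → s + 1 ≤ m + q → (∀ i, m' ≤ i → i < m → ¬ E₂ i j) →
        ∃ m'', m' ≤ m'' ∧ (m'' = 0 ∨ ¬ E₁ (m''-1) j) ∧ ∀ i, m' ≤ i → i < m'' → ¬ E₂ i j by
      obtain ⟨m'', h1, h2, h3⟩ := h (s+1) m' le_rfl (by omega) (fun i h1 h2 => absurd h2 (by omega))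
      exact ⟨m'', fun _ => ⟨h1, h2, h3⟩⟩
    intro q
    induction q with
    | zero =>
      intro m hm hs hQ
      refine ⟨m, hm, Or.inr fun hE => ?_, hQ⟩
      have := hbd _ _ hE
      omega
    | succ q ih =>
      intro m hm hs hQ
      by_cases h0 : m = 0
      · refine ⟨0, by omega, Or.inl rfl, by omega⟩
      by_cases hE : E₁ (m-1) j
      · have hnE₂ : ¬ E₂ m j := by
          intro hE₂
          have hmm : m - 1 + 1 = m := by omega
          obtain ⟨hd, hc⟩ := (hsq (m-1) j).mp ⟨hE, by rw [hmm]; exact hE₂⟩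
          rcases Nat.eq_or_lt_of_le hm with heq | hlt
          · rcases hm' with h0' | hnE'
            · omega
            · rw [← heq] at hc; exact hnE' hc
          · exact hQ (m-1) (by omega) (by omega) hd
        have hQ' : ∀ i, m' ≤ i → i < m + 1 → ¬ E₂ i j := by
          intro i h1 h2
          rcases Nat.lt_or_ge i m with h | h
          · exact hQ i h1 h
          · have : i = m := by omega
            rw [this]; exact hnE₂
        exact ih (m+1) (by omega) (by omega) hQ'
      · exact ⟨m, hm, Or.inr hE, hQ⟩
  · exact ⟨0, fun h => absurd h hm'⟩

lemma wall (s : ℕ)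
    (hsq : ∀ i j, (E₁ i j ∧ E₂ (i+1) j) ↔ (E₂ i j ∧ E₁ i (j+1)))
    (hbd : ∀ i j, E₁ i j → i < s)
    (i₀ j₀ : ℕ) (hseed : ¬ E₁ i₀ j₀) :
    ∃ g : ℕ → ℕ, g j₀ = i₀ + 1 ∧ (∀ j, g (j+1) ≤ g j) ∧
      (∀ j, g j = 0 ∨ ¬ E₁ (g j - 1) j) ∧
      (∀ j i, g (j+1) ≤ i → i < g j → ¬ E₂ i j) := by
  classical
  choose up hup using wall_up E₁ E₂ hsq
  choose down hdown using wall_down E₁ E₂ s hsq hbd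
  -- upward values: F d = value at row j₀ + d
  let F : ℕ → ℕ := fun d => Nat.rec (i₀ + 1) (fun d prev => up (j₀ + d) prev) d
  have hF0 : F 0 = i₀ + 1 := rfl
  have hFs : ∀ d, F (d+1) = up (j₀ + d) (F d) := fun d => rfl
  have hFinv : ∀ d, F d = 0 ∨ ¬ E₁ (F d - 1) (j₀ + d) := by
    intro d
    induction d with
    | zero => exact Or.inr (by simpa [hF0] using hseed)
    | succ d ih =>
      have := (hup (j₀ + d) (F d) ih).2.1
      rw [hFs d]
      exact this
  -- downward values: D d = value at row j₀ - d
  let D : ℕ → ℕ := fun d => Nat.rec (i₀ + 1)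
    (fun d prev => if d < j₀ then down (j₀ - (d+1)) prev else prev) d
  have hD0 : D 0 = i₀ + 1 := rfl
  have hDs : ∀ d, D (d+1) = if d < j₀ then down (j₀ - (d+1)) (D d) else D d := fun d => rfl
  have hDinv : ∀ d, D d = 0 ∨ ¬ E₁ (D d - 1) (j₀ - d) := by
    intro d
    induction d with
    | zero => exact Or.inr (by simpa [hD0] using hseed)
    | succ d ih =>
      rw [hDs d]
      by_cases hd : d < j₀
      · rw [if_pos hd]
        have hrow : j₀ - (d+1) + 1 = j₀ - d := by omega
        have ih' : D d = 0 ∨ ¬ E₁ (D d - 1) (j₀ - (d+1) + 1) := by rw [hrow]; exact ih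
        exact (hdown (j₀ - (d+1)) (D d) ih').2.1
      · rw [if_neg hd]
        have : j₀ - (d+1) = j₀ - d := by omega
        rw [this]; exact ih
  set G : ℕ → ℕ := fun j => if j₀ ≤ j then F (j - j₀) else D (j₀ - j) with hGdef
  have hGeq : ∀ j, G j = if j₀ ≤ j then F (j - j₀) else D (j₀ - j) := fun _ => rfl
  have hGinv : ∀ j, G j = 0 ∨ ¬ E₁ (G j - 1) j := by
    intro j
    rw [hGeq j]
    rcases Nat.lt_or_ge j j₀ with hj | hj
    · rw [if_neg (by omega)]
      have h' := hDinv (j₀ - j)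
      rwa [show j₀ - (j₀ - j) = j from by omega] at h'
    · rw [if_pos (by omega)]
      have h' := hFinv (j - j₀)
      rwa [show j₀ + (j - j₀) = j from by omega] at h'
  have hGup : ∀ j, j₀ ≤ j → G (j+1) = up j (G j) := by
    intro j hj
    rw [hGeq (j+1), hGeq j, if_pos (by omega), if_pos (by omega),
      show j + 1 - j₀ = (j - j₀) + 1 from by omega, hFs,
      show j₀ + (j - j₀) = j from by omega]
  have hGdown : ∀ j, j < j₀ → G j = down j (G (j+1)) := by
    intro j hj
    have hup1 : D (j₀ - (j+1)) = G (j+1) := by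
      rw [hGeq (j+1)]
      rcases Nat.lt_or_ge (j+1) j₀ with hj1 | hj1
      · rw [if_neg (by omega)]
      · rw [if_pos (by omega), show j + 1 - j₀ = 0 from by omega, hF0,
          show j₀ - (j+1) = 0 from by omega, hD0]
    rw [hGeq j, if_neg (by omega),
      show j₀ - j = (j₀ - (j+1)) + 1 from by omega, hDs, if_pos (by omega),
      show j₀ - (j₀ - (j+1) + 1) = j from by omega, hup1]
  refine ⟨G, by rw [hGeq]; simp [hF0], ?_, hGinv, ?_⟩
  · intro j
    rcases Nat.lt_or_ge j j₀ with hj | hj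
    · rw [hGdown j hj]
      exact (hdown j (G (j+1)) (hGinv (j+1))).1
    · rw [hGup j hj]
      exact (hup j (G j) (hGinv j)).1
  · intro j i h1 h2
    rcases Nat.lt_or_ge j j₀ with hj | hj
    · rw [hGdown j hj] at h2
      exact (hdown j (G (j+1)) (hGinv (j+1))).2.2 i h1 h2
    · rw [hGup j hj] at h1
      exact (hup j (G j) (hGinv j)).2.2 i h1 h2

end Wall



section Rep

variable {r : ℕ} {H₁ H₂ Y₁ Y₂ : Module.End ℂ (Fin r → ℂ)}
  {lam₁ lam₂ : ℝ} {s t : ℕ} {V : ℕ → ℕ → Submodule ℂ (Fin r → ℂ)}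

lemma mem_V (hV : ∀ i j : ℕ, V i j =
      Module.End.eigenspace H₁ ((lam₁ : ℂ) - i) ⊓ Module.End.eigenspace H₂ ((lam₂ : ℂ) - j))
    {i j : ℕ} {x : Fin r → ℂ} :
    x ∈ V i j ↔ H₁ x = ((lam₁ : ℂ) - i) • x ∧ H₂ x = ((lam₂ : ℂ) - j) • x := by
  rw [hV, Submodule.mem_inf, Module.End.mem_eigenspace_iff, Module.End.mem_eigenspace_iff]

lemma mapY₁_le
    (hH₂Y₁ : Commute H₂ Y₁) (hrel₁ : H₁ * Y₁ - Y₁ * H₁ = -Y₁)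
    (hV : ∀ i j : ℕ, V i j =
      Module.End.eigenspace H₁ ((lam₁ : ℂ) - i) ⊓ Module.End.eigenspace H₂ ((lam₂ : ℂ) - j))
    (i j : ℕ) : Submodule.map Y₁ (V i j) ≤ V (i+1) j := by
  intro x hx
  obtain ⟨y, hy, rfl⟩ := Submodule.mem_map.mp hx
  rw [mem_V hV] at hy ⊢
  obtain ⟨h1, h2⟩ := hy
  constructor
  · have hc : H₁ (Y₁ y) - Y₁ (H₁ y) = -(Y₁ y) := by
      have := congrArg (fun f : Module.End ℂ (Fin r → ℂ) => f y) hrel₁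
      simpa [Module.End.mul_apply] using this
    have : H₁ (Y₁ y) = Y₁ (H₁ y) - Y₁ y := by
      rw [sub_eq_iff_eq_add] at hc
      rw [hc]; ring_nf
    rw [this, h1, map_smul,
      show ((lam₁ : ℂ) - ↑(i+1)) = ((lam₁ : ℂ) - i) - 1 by push_cast; ring]
    module
  · have hc : H₂ (Y₁ y) = Y₁ (H₂ y) := by
      have := congrArg (fun f : Module.End ℂ (Fin r → ℂ) => f y) hH₂Y₁.eq
      simpa [Module.End.mul_apply] using this
    rw [hc, h2, map_smul]

lemma mapY₂_le
    (hH₁Y₂ : Commute H₁ Y₂) (hrel₂ : H₂ * Y₂ - Y₂ * H₂ = -Y₂)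
    (hV : ∀ i j : ℕ, V i j =
      Module.End.eigenspace H₁ ((lam₁ : ℂ) - i) ⊓ Module.End.eigenspace H₂ ((lam₂ : ℂ) - j))
    (i j : ℕ) : Submodule.map Y₂ (V i j) ≤ V i (j+1) := by
  intro x hx
  obtain ⟨y, hy, rfl⟩ := Submodule.mem_map.mp hx
  rw [mem_V hV] at hy ⊢
  obtain ⟨h1, h2⟩ := hy
  constructor
  · have hc : H₁ (Y₂ y) = Y₂ (H₁ y) := by
      have := congrArg (fun f : Module.End ℂ (Fin r → ℂ) => f y) hH₁Y₂.eq
      simpa [Module.End.mul_apply] using this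
    rw [hc, h1, map_smul]
  · have hc : H₂ (Y₂ y) - Y₂ (H₂ y) = -(Y₂ y) := by
      have := congrArg (fun f : Module.End ℂ (Fin r → ℂ) => f y) hrel₂
      simpa [Module.End.mul_apply] using this
    have : H₂ (Y₂ y) = Y₂ (H₂ y) - Y₂ y := by
      rw [sub_eq_iff_eq_add] at hc
      rw [hc]; ring_nf
    rw [this, h2, map_smul,
      show ((lam₂ : ℂ) - ↑(j+1)) = ((lam₂ : ℂ) - j) - 1 by push_cast; ring]
    module

lemma one_dim
    (hmf : ∀ a b : ℂ, Module.finrank ℂ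
      ↥(Module.End.eigenspace H₁ a ⊓ Module.End.eigenspace H₂ b) ≤ 1)
    (hV : ∀ i j : ℕ, V i j =
      Module.End.eigenspace H₁ ((lam₁ : ℂ) - i) ⊓ Module.End.eigenspace H₂ ((lam₂ : ℂ) - j))
    (i j : ℕ) (U : Submodule ℂ (Fin r → ℂ)) (hle : U ≤ V i j) (hne : U ≠ ⊥) :
    U = V i j := by
  have h1 : Module.finrank ℂ (V i j) ≤ 1 := by rw [hV]; exact hmf _ _
  have h2 : 1 ≤ Module.finrank ℂ U := by
    by_contra h
    have h0 : Module.finrank ℂ U = 0 := by omega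
    exact hne (Submodule.finrank_eq_zero.mp h0)
  exact Submodule.eq_of_le_of_finrank_le hle (h1.trans h2)

lemma span_V
    (hmf : ∀ a b : ℂ, Module.finrank ℂ
      ↥(Module.End.eigenspace H₁ a ⊓ Module.End.eigenspace H₂ b) ≤ 1)
    (hV : ∀ i j : ℕ, V i j =
      Module.End.eigenspace H₁ ((lam₁ : ℂ) - i) ⊓ Module.End.eigenspace H₂ ((lam₂ : ℂ) - j))
    {i j : ℕ} (hne : V i j ≠ ⊥) :
    ∃ v : Fin r → ℂ, v ≠ 0 ∧ V i j = Submodule.span ℂ {v} := by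
  obtain ⟨v, hv, hv0⟩ := (Submodule.ne_bot_iff _).mp hne
  refine ⟨v, hv0, ?_⟩
  refine (one_dim hmf hV i j _ ?_ ?_).symm
  · rw [Submodule.span_singleton_le_iff_mem]; exact hv
  · simpa [Submodule.span_singleton_eq_bot] using hv0

lemma bound₁
    (hev₁ : ∀ μ : ℂ, Module.End.HasEigenvalue H₁ μ ↔ ∃ i : ℕ, i ≤ s ∧ μ = (lam₁ : ℂ) - i)
    (hV : ∀ i j : ℕ, V i j =
      Module.End.eigenspace H₁ ((lam₁ : ℂ) - i) ⊓ Module.End.eigenspace H₂ ((lam₂ : ℂ) - j))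
    {i j : ℕ} (hne : V i j ≠ ⊥) : i ≤ s := by
  have he : Module.End.eigenspace H₁ ((lam₁ : ℂ) - i) ≠ ⊥ := by
    intro hb
    apply hne
    rw [hV, hb, bot_inf_eq]
  obtain ⟨i', hi', heq⟩ := (hev₁ _).mp (Module.End.hasEigenvalue_iff.mpr he)
  have : (i : ℂ) = (i' : ℂ) := sub_right_inj.mp heq
  have : i = i' := by exact_mod_cast this
  omega

lemma bound₂
    (hev₂ : ∀ μ : ℂ, Module.End.HasEigenvalue H₂ μ ↔ ∃ j : ℕ, j ≤ t ∧ μ = (lam₂ : ℂ) - j)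
    (hV : ∀ i j : ℕ, V i j =
      Module.End.eigenspace H₁ ((lam₁ : ℂ) - i) ⊓ Module.End.eigenspace H₂ ((lam₂ : ℂ) - j))
    {i j : ℕ} (hne : V i j ≠ ⊥) : j ≤ t := by
  have he : Module.End.eigenspace H₂ ((lam₂ : ℂ) - j) ≠ ⊥ := by
    intro hb
    apply hne
    rw [hV, hb, inf_bot_eq]
  obtain ⟨j', hj', heq⟩ := (hev₂ _).mp (Module.End.hasEigenvalue_iff.mpr he)
  have : (j : ℂ) = (j' : ℂ) := sub_right_inj.mp heq
  have : j = j' := by exact_mod_cast this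
  omega

lemma maxGen_eq {f : Module.End ℂ (Fin r → ℂ)}
    (hdiag : (⨆ μ : ℂ, Module.End.eigenspace f μ) = ⊤) (μ : ℂ) :
    f.maxGenEigenspace μ = f.eigenspace μ := by
  refine le_antisymm ?_ ?_
  swap
  · intro x hx
    rw [Module.End.mem_maxGenEigenspace]
    refine ⟨1, ?_⟩
    rw [Module.End.mem_eigenspace_iff] at hx
    simp [LinearMap.sub_apply, hx]
  intro x hx
  rw [Module.End.mem_maxGenEigenspace] at hx
  obtain ⟨k, hk⟩ := hx
  set g := f - μ • (1 : Module.End ℂ (Fin r → ℂ)) with hg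
  have hrange : ∀ y : Fin r → ℂ, g y ∈ ⨆ (ν : ℂ) (_ : ν ≠ μ), f.eigenspace ν := by
    intro y
    have hy : y ∈ (⊤ : Submodule ℂ (Fin r → ℂ)) := trivial
    rw [← hdiag] at hy
    have hmap : Submodule.map g (⨆ ν : ℂ, f.eigenspace ν) ≤
        ⨆ (ν : ℂ) (_ : ν ≠ μ), f.eigenspace ν := by
      rw [Submodule.map_iSup]
      refine iSup_le fun ν => ?_
      intro z hz
      obtain ⟨w, hw, rfl⟩ := Submodule.mem_map.mp hz
      have hgw : g w = (ν - μ) • w := by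
        rw [Module.End.mem_eigenspace_iff] at hw
        simp [hg, LinearMap.sub_apply, hw, sub_smul]
      rcases eq_or_ne ν μ with rfl | hν
      · simp [hgw]
      · rw [hgw]
        exact Submodule.smul_mem _ _
          (le_iSup₂ (f := fun (ν : ℂ) (_ : ν ≠ μ) => f.eigenspace ν) ν hν hw)
    exact hmap (Submodule.mem_map.mpr ⟨y, hy, rfl⟩)
  have hdisj : Disjoint (f.eigenspace μ) (⨆ (ν : ℂ) (_ : ν ≠ μ), f.eigenspace ν) :=
    (iSupIndep_def.mp f.eigenspaces_iSupIndep) μ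
  have key : ∀ y : Fin r → ℂ, g (g y) = 0 → g y = 0 := by
    intro y hy
    refine (Submodule.disjoint_def.mp hdisj) _ ?_ (hrange y)
    rw [Module.End.mem_eigenspace_iff]
    have h2 : f (g y) - μ • (g y) = 0 := by
      simpa [hg, LinearMap.sub_apply] using hy
    rw [sub_eq_zero] at h2
    exact h2
  have iter : ∀ (k : ℕ) (y : Fin r → ℂ), (g ^ (k+1)) y = 0 → g y = 0 := by
    intro k
    induction k with
    | zero => intro y h; simpa [pow_one] using h
    | succ k ih =>
      intro y h
      refine key y (ih (g y) ?_)
      rw [← Module.End.mul_apply, ← pow_succ]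
      exact h
  rw [Module.End.mem_eigenspace_iff]
  cases k with
  | zero =>
    have : x = 0 := by simpa using hk
    simp [this]
  | succ k =>
    have := iter k x hk
    have h2 : f x - μ • x = 0 := by simpa [hg, LinearMap.sub_apply] using this
    rw [sub_eq_zero] at h2
    exact h2

lemma htop_V
    (hHH : Commute H₁ H₂)
    (hdiag₁ : (⨆ μ : ℂ, Module.End.eigenspace H₁ μ) = ⊤)
    (hdiag₂ : (⨆ μ : ℂ, Module.End.eigenspace H₂ μ) = ⊤)
    (hev₁ : ∀ μ : ℂ, Module.End.HasEigenvalue H₁ μ ↔ ∃ i : ℕ, i ≤ s ∧ μ = (lam₁ : ℂ) - i)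
    (hev₂ : ∀ μ : ℂ, Module.End.HasEigenvalue H₂ μ ↔ ∃ j : ℕ, j ≤ t ∧ μ = (lam₂ : ℂ) - j)
    (hV : ∀ i j : ℕ, V i j =
      Module.End.eigenspace H₁ ((lam₁ : ℂ) - i) ⊓ Module.End.eigenspace H₂ ((lam₂ : ℂ) - j)) :
    (⨆ p : ℕ × ℕ, V p.1 p.2) = ⊤ := by
  classical
  set f : Fin 2 → Module.End ℂ (Fin r → ℂ) := fun i => if i = 0 then H₁ else H₂ with hf
  have hf0 : f 0 = H₁ := rfl
  have hf1 : f 1 = H₂ := rfl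
  have hcomm : Pairwise fun i j => Commute (f i) (f j) := by
    intro i j hij
    fin_cases i <;> fin_cases j <;>
      first
        | exact absurd rfl hij
        | exact hHH
        | exact hHH.symm
  have hmax : ∀ i, ⨆ μ : ℂ, (f i).maxGenEigenspace μ = ⊤ := by
    intro i
    fin_cases i
    · show ⨆ μ : ℂ, (f 0).maxGenEigenspace μ = ⊤
      rw [hf0]
      simp_rw [maxGen_eq hdiag₁]
      exact hdiag₁
    · show ⨆ μ : ℂ, (f 1).maxGenEigenspace μ = ⊤
      rw [hf1]
      simp_rw [maxGen_eq hdiag₂]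
      exact hdiag₂
  have h := Module.End.iSup_iInf_maxGenEigenspace_eq_top_of_iSup_maxGenEigenspace_eq_top_of_commute
    f hcomm hmax
  refine le_antisymm le_top ?_
  rw [← h]
  refine iSup_le fun χ => ?_
  have hiInf : (⨅ i, (f i).maxGenEigenspace (χ i)) =
      Module.End.eigenspace H₁ (χ 0) ⊓ Module.End.eigenspace H₂ (χ 1) := by
    apply le_antisymm
    · refine le_inf ?_ ?_
      · refine (iInf_le _ 0).trans ?_
        rw [hf0, maxGen_eq hdiag₁]
      · refine (iInf_le _ 1).trans ?_
        rw [hf1, maxGen_eq hdiag₂]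
    · refine le_iInf fun i => ?_
      fin_cases i
      · show _ ≤ (f 0).maxGenEigenspace (χ 0)
        rw [hf0, maxGen_eq hdiag₁]
        exact inf_le_left
      · show _ ≤ (f 1).maxGenEigenspace (χ 1)
        rw [hf1, maxGen_eq hdiag₂]
        exact inf_le_right
  rw [hiInf]
  rcases eq_or_ne (Module.End.eigenspace H₁ (χ 0) ⊓ Module.End.eigenspace H₂ (χ 1)) ⊥ with hb | hb
  · rw [hb]; exact bot_le
  · have h1 : Module.End.HasEigenvalue H₁ (χ 0) := by
      rw [Module.End.hasEigenvalue_iff]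
      intro hc
      exact hb (by rw [hc, bot_inf_eq])
    have h2 : Module.End.HasEigenvalue H₂ (χ 1) := by
      rw [Module.End.hasEigenvalue_iff]
      intro hc
      exact hb (by rw [hc, inf_bot_eq])
    obtain ⟨i, _, hieq⟩ := (hev₁ (χ 0)).mp h1
    obtain ⟨j, _, hjeq⟩ := (hev₂ (χ 1)).mp h2
    have hVij : Module.End.eigenspace H₁ (χ 0) ⊓ Module.End.eigenspace H₂ (χ 1) = V i j := by
      rw [hV, hieq, hjeq]
    rw [hVij]
    exact le_iSup (fun p : ℕ × ℕ => V p.1 p.2) (i, j)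

lemma indep_V
    (hV : ∀ i j : ℕ, V i j =
      Module.End.eigenspace H₁ ((lam₁ : ℂ) - i) ⊓ Module.End.eigenspace H₂ ((lam₂ : ℂ) - j)) :
    iSupIndep (fun p : ℕ × ℕ => V p.1 p.2) := by
  rw [iSupIndep_def]
  rintro ⟨i, j⟩
  have hd₁ : Disjoint (Module.End.eigenspace H₁ ((lam₁ : ℂ) - i))
      (⨆ (μ' : ℂ) (_ : μ' ≠ (lam₁ : ℂ) - i), Module.End.eigenspace H₁ μ') :=
    (iSupIndep_def.mp H₁.eigenspaces_iSupIndep) _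
  have hd₂ : Disjoint (Module.End.eigenspace H₂ ((lam₂ : ℂ) - j))
      (⨆ (ν' : ℂ) (_ : ν' ≠ (lam₂ : ℂ) - j), Module.End.eigenspace H₂ ν') :=
    (iSupIndep_def.mp H₂.eigenspaces_iSupIndep) _
  set Z := ⨆ (j' : ℕ) (_ : j' ≠ j), V i j' with hZ
  set Yv := ⨆ (μ' : ℂ) (_ : μ' ≠ (lam₁ : ℂ) - i), Module.End.eigenspace H₁ μ' with hYv
  have hbound : (⨆ (q : ℕ × ℕ) (_ : q ≠ (i, j)), V q.1 q.2) ≤ Z ⊔ Yv := by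
    refine iSup₂_le ?_
    rintro ⟨i', j'⟩ hq
    rcases eq_or_ne i' i with rfl | hne
    · have hj' : j' ≠ j := fun hc => hq (by rw [hc])
      exact le_trans (le_iSup₂ (f := fun (j'' : ℕ) (_ : j'' ≠ j) => V i' j'') j' hj') le_sup_left
    · have hle : V i' j' ≤ Module.End.eigenspace H₁ ((lam₁ : ℂ) - i') := by
        rw [hV]; exact inf_le_left
      have hμ : ((lam₁ : ℂ) - i') ≠ (lam₁ : ℂ) - i := by
        intro hc
        exact hne (by exact_mod_cast sub_right_inj.mp hc)
      exact le_trans (hle.trans (le_iSup₂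
        (f := fun (μ' : ℂ) (_ : μ' ≠ (lam₁ : ℂ) - i) => Module.End.eigenspace H₁ μ') _ hμ))
        le_sup_right
  refine Disjoint.mono_right hbound ?_
  rw [Submodule.disjoint_def]
  intro x hxV hxZY
  obtain ⟨u, hu, w, hw, hx⟩ := Submodule.mem_sup.mp hxZY
  have hZle : Z ≤ Module.End.eigenspace H₁ ((lam₁ : ℂ) - i) := by
    refine iSup₂_le fun j' _ => ?_
    rw [hV]; exact inf_le_left
  have hxe : x ∈ Module.End.eigenspace H₁ ((lam₁ : ℂ) - i) := by
    rw [hV] at hxV; exact hxV.1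
  have hwe : w ∈ Module.End.eigenspace H₁ ((lam₁ : ℂ) - i) := by
    have : x - u = w := by rw [← hx]; abel
    rw [← this]
    exact sub_mem hxe (hZle hu)
  have hw0 : w = 0 := (Submodule.disjoint_def.mp hd₁) w hwe hw
  have hxu : x = u := by rw [← hx, hw0, add_zero]
  have hZle₂ : Z ≤ ⨆ (ν' : ℂ) (_ : ν' ≠ (lam₂ : ℂ) - j), Module.End.eigenspace H₂ ν' := by
    refine iSup₂_le fun j' hj' => ?_
    have h1 : V i j' ≤ Module.End.eigenspace H₂ ((lam₂ : ℂ) - j') := by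
      rw [hV]; exact inf_le_right
    have hν : ((lam₂ : ℂ) - j') ≠ (lam₂ : ℂ) - j := by
      intro hc
      exact hj' (by exact_mod_cast sub_right_inj.mp hc)
    exact h1.trans (le_iSup₂
      (f := fun (ν' : ℂ) (_ : ν' ≠ (lam₂ : ℂ) - j) => Module.End.eigenspace H₂ ν') _ hν)
  have hxe₂ : x ∈ Module.End.eigenspace H₂ ((lam₂ : ℂ) - j) := by
    rw [hV] at hxV; exact hxV.2
  exact (Submodule.disjoint_def.mp hd₂) x hxe₂ (by rw [hxu]; exact hZle₂ hu)

lemma colNonempty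
    (hHH : Commute H₁ H₂)
    (hdiag₁ : (⨆ μ : ℂ, Module.End.eigenspace H₁ μ) = ⊤)
    (hdiag₂ : (⨆ μ : ℂ, Module.End.eigenspace H₂ μ) = ⊤)
    (hev₁ : ∀ μ : ℂ, Module.End.HasEigenvalue H₁ μ ↔ ∃ i : ℕ, i ≤ s ∧ μ = (lam₁ : ℂ) - i)
    (hev₂ : ∀ μ : ℂ, Module.End.HasEigenvalue H₂ μ ↔ ∃ j : ℕ, j ≤ t ∧ μ = (lam₂ : ℂ) - j)
    (hV : ∀ i j : ℕ, V i j =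
      Module.End.eigenspace H₁ ((lam₁ : ℂ) - i) ⊓ Module.End.eigenspace H₂ ((lam₂ : ℂ) - j))
    {i : ℕ} (hi : i ≤ s) : ∃ j, V i j ≠ ⊥ := by
  by_contra h
  push_neg at h
  have hev : Module.End.HasEigenvalue H₁ ((lam₁ : ℂ) - i) := (hev₁ _).mpr ⟨i, hi, rfl⟩
  rw [Module.End.hasEigenvalue_iff] at hev
  apply hev
  rw [eq_bot_iff]
  intro x hx
  have hd₁ : Disjoint (Module.End.eigenspace H₁ ((lam₁ : ℂ) - i))
      (⨆ (μ' : ℂ) (_ : μ' ≠ (lam₁ : ℂ) - i), Module.End.eigenspace H₁ μ') :=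
    (iSupIndep_def.mp H₁.eigenspaces_iSupIndep) _
  have hx2 : x ∈ ⨆ (μ' : ℂ) (_ : μ' ≠ (lam₁ : ℂ) - i), Module.End.eigenspace H₁ μ' := by
    have hxt : x ∈ ⨆ p : ℕ × ℕ, V p.1 p.2 := by
      rw [htop_V hHH hdiag₁ hdiag₂ hev₁ hev₂ hV]; trivial
    refine (iSup_le fun p : ℕ × ℕ => ?_ :
        (⨆ p : ℕ × ℕ, V p.1 p.2) ≤ ⨆ (μ' : ℂ) (_ : μ' ≠ (lam₁ : ℂ) - i),
          Module.End.eigenspace H₁ μ') hxt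
    obtain ⟨i', j'⟩ := p
    rcases eq_or_ne i' i with rfl | hne
    · rw [h j']; exact bot_le
    · have hle : V i' j' ≤ Module.End.eigenspace H₁ ((lam₁ : ℂ) - i') := by
        rw [hV]; exact inf_le_left
      have hμ : ((lam₁ : ℂ) - i') ≠ (lam₁ : ℂ) - i := by
        intro hc
        exact hne (by exact_mod_cast sub_right_inj.mp hc)
      exact hle.trans (le_iSup₂
        (f := fun (μ' : ℂ) (_ : μ' ≠ (lam₁ : ℂ) - i) => Module.End.eigenspace H₁ μ') _ hμ)
  have : x = 0 := (Submodule.disjoint_def.mp hd₁) x hx hx2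
  simp [this]

lemma sub_ne_bot {U W : Submodule ℂ (Fin r → ℂ)} (hle : U ≤ W) (h : U ≠ ⊥) : W ≠ ⊥ :=
  fun hc => h (le_bot_iff.mp (hc ▸ hle))

lemma sq_V (hYY : Commute Y₁ Y₂)
    (hH₂Y₁ : Commute H₂ Y₁) (hrel₁ : H₁ * Y₁ - Y₁ * H₁ = -Y₁)
    (hH₁Y₂ : Commute H₁ Y₂) (hrel₂ : H₂ * Y₂ - Y₂ * H₂ = -Y₂)
    (hmf : ∀ a b : ℂ, Module.finrank ℂ
      ↥(Module.End.eigenspace H₁ a ⊓ Module.End.eigenspace H₂ b) ≤ 1)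
    (hV : ∀ i j : ℕ, V i j =
      Module.End.eigenspace H₁ ((lam₁ : ℂ) - i) ⊓ Module.End.eigenspace H₂ ((lam₂ : ℂ) - j))
    (i j : ℕ) :
    ((Submodule.map Y₁ (V i j) ≠ ⊥) ∧ (Submodule.map Y₂ (V (i+1) j) ≠ ⊥)) ↔
      ((Submodule.map Y₂ (V i j) ≠ ⊥) ∧ (Submodule.map Y₁ (V i (j+1)) ≠ ⊥)) := by
  by_cases hvb : V i j = ⊥
  · simp [hvb]
  obtain ⟨v, hv0, hsp⟩ := span_V hmf hV hvb
  have hvm : v ∈ V i j := by rw [hsp]; exact Submodule.mem_span_singleton_self v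
  have hE1 : (Submodule.map Y₁ (V i j) ≠ ⊥) ↔ Y₁ v ≠ 0 := by
    rw [hsp, Submodule.map_span, Set.image_singleton]
    simp [Submodule.span_singleton_eq_bot]
  have hE2 : (Submodule.map Y₂ (V i j) ≠ ⊥) ↔ Y₂ v ≠ 0 := by
    rw [hsp, Submodule.map_span, Set.image_singleton]
    simp [Submodule.span_singleton_eq_bot]
  have hVup₁ : Y₁ v ≠ 0 → V (i+1) j = Submodule.span ℂ {Y₁ v} := by
    intro h
    refine (one_dim hmf hV _ _ _ ?_ ?_).symm
    · rw [Submodule.span_singleton_le_iff_mem]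
      exact mapY₁_le hH₂Y₁ hrel₁ hV i j (Submodule.mem_map.mpr ⟨v, hvm, rfl⟩)
    · simpa [Submodule.span_singleton_eq_bot] using h
  have hVup₂ : Y₂ v ≠ 0 → V i (j+1) = Submodule.span ℂ {Y₂ v} := by
    intro h
    refine (one_dim hmf hV _ _ _ ?_ ?_).symm
    · rw [Submodule.span_singleton_le_iff_mem]
      exact mapY₂_le hH₁Y₂ hrel₂ hV i j (Submodule.mem_map.mpr ⟨v, hvm, rfl⟩)
    · simpa [Submodule.span_singleton_eq_bot] using h
  have hleft : ((Submodule.map Y₁ (V i j) ≠ ⊥) ∧ (Submodule.map Y₂ (V (i+1) j) ≠ ⊥)) ↔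
      Y₂ (Y₁ v) ≠ 0 := by
    constructor
    · rintro ⟨h1, h2⟩
      have hY1v := hE1.mp h1
      rw [hVup₁ hY1v, Submodule.map_span, Set.image_singleton] at h2
      simpa [Submodule.span_singleton_eq_bot] using h2
    · intro h
      have hY1v : Y₁ v ≠ 0 := fun hc => h (by rw [hc, map_zero])
      refine ⟨hE1.mpr hY1v, ?_⟩
      rw [hVup₁ hY1v, Submodule.map_span, Set.image_singleton]
      simpa [Submodule.span_singleton_eq_bot] using h
  have hright : ((Submodule.map Y₂ (V i j) ≠ ⊥) ∧ (Submodule.map Y₁ (V i (j+1)) ≠ ⊥)) ↔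
      Y₁ (Y₂ v) ≠ 0 := by
    constructor
    · rintro ⟨h1, h2⟩
      have hY2v := hE2.mp h1
      rw [hVup₂ hY2v, Submodule.map_span, Set.image_singleton] at h2
      simpa [Submodule.span_singleton_eq_bot] using h2
    · intro h
      have hY2v : Y₂ v ≠ 0 := fun hc => h (by rw [hc, map_zero])
      refine ⟨hE2.mpr hY2v, ?_⟩
      rw [hVup₂ hY2v, Submodule.map_span, Set.image_singleton]
      simpa [Submodule.span_singleton_eq_bot] using h
  rw [hleft, hright]
  have hc : Y₂ (Y₁ v) = Y₁ (Y₂ v) := by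
    have := congrArg (fun f : Module.End ℂ (Fin r → ℂ) => f v) hYY.eq
    simpa [Module.End.mul_apply] using this.symm
  rw [hc]

lemma decomp
    (hH₂Y₁ : Commute H₂ Y₁) (hrel₁ : H₁ * Y₁ - Y₁ * H₁ = -Y₁)
    (hH₁Y₂ : Commute H₁ Y₂) (hrel₂ : H₂ * Y₂ - Y₂ * H₂ = -Y₂)
    (hHH : Commute H₁ H₂)
    (hdiag₁ : (⨆ μ : ℂ, Module.End.eigenspace H₁ μ) = ⊤)
    (hdiag₂ : (⨆ μ : ℂ, Module.End.eigenspace H₂ μ) = ⊤)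
    (hev₁ : ∀ μ : ℂ, Module.End.HasEigenvalue H₁ μ ↔ ∃ i : ℕ, i ≤ s ∧ μ = (lam₁ : ℂ) - i)
    (hev₂ : ∀ μ : ℂ, Module.End.HasEigenvalue H₂ μ ↔ ∃ j : ℕ, j ≤ t ∧ μ = (lam₂ : ℂ) - j)
    (hmf : ∀ a b : ℂ, Module.finrank ℂ
      ↥(Module.End.eigenspace H₁ a ⊓ Module.End.eigenspace H₂ b) ≤ 1)
    (hV : ∀ i j : ℕ, V i j =
      Module.End.eigenspace H₁ ((lam₁ : ℂ) - i) ⊓ Module.End.eigenspace H₂ ((lam₂ : ℂ) - j))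
    (A : ℕ → ℕ → Prop)
    (hA₁ : ∀ i j, A i j → A (i+1) j) (hA₂ : ∀ i j, A i j → A i (j+1))
    (hc₁ : ∀ i j, ¬ A i j → A (i+1) j → Submodule.map Y₁ (V i j) = ⊥)
    (hc₂ : ∀ i j, ¬ A i j → A i (j+1) → Submodule.map Y₂ (V i j) = ⊥)
    (hne₁ : ∃ p : ℕ × ℕ, A p.1 p.2 ∧ V p.1 p.2 ≠ ⊥)
    (hne₂ : ∃ p : ℕ × ℕ, ¬ A p.1 p.2 ∧ V p.1 p.2 ≠ ⊥) :
    ∃ W₁ W₂ : Submodule ℂ (Fin r → ℂ), W₁ ≠ ⊥ ∧ W₂ ≠ ⊥ ∧ IsCompl W₁ W₂ ∧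
      InvariantB2 H₁ H₂ Y₁ Y₂ W₁ ∧ InvariantB2 H₁ H₂ Y₁ Y₂ W₂ := by
  classical
  set T := {p : ℕ × ℕ // V p.1 p.2 ≠ ⊥} with hT
  have hind : iSupIndep (fun q : T => V q.1.1 q.1.2) :=
    (indep_V hV).comp Subtype.val_injective
  choose v hv hv0 using fun q : T => (Submodule.ne_bot_iff _).mp q.2
  have hli : LinearIndependent ℂ v := iSupIndep.linearIndependent _ hind hv hv0
  have hspan : ∀ q : T, V q.1.1 q.1.2 = Submodule.span ℂ {v q} := by
    intro q
    refine (one_dim hmf hV _ _ _ ?_ ?_).symm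
    · rw [Submodule.span_singleton_le_iff_mem]; exact hv q
    · simpa [Submodule.span_singleton_eq_bot] using hv0 q
  set X₁ : Set T := {q | A q.1.1 q.1.2} with hX₁
  set X₂ : Set T := {q | ¬ A q.1.1 q.1.2} with hX₂
  set W₁ := Submodule.span ℂ (v '' X₁) with hW₁
  set W₂ := Submodule.span ℂ (v '' X₂) with hW₂
  have hVleW : ∀ (X : Set T) (q : T), q ∈ X → V q.1.1 q.1.2 ≤ Submodule.span ℂ (v '' X) := by
    intro X q hq
    rw [hspan q]
    exact Submodule.span_mono (Set.singleton_subset_iff.mpr ⟨q, hq, rfl⟩)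
  -- invariance helper
  have hinvgen : ∀ (X : Set T) (f : Module.End ℂ (Fin r → ℂ)),
      (∀ q ∈ X, f (v q) ∈ Submodule.span ℂ (v '' X)) →
      ∀ x ∈ Submodule.span ℂ (v '' X), f x ∈ Submodule.span ℂ (v '' X) := by
    intro X f hf x hx
    induction hx using Submodule.span_induction with
    | mem y hy =>
      obtain ⟨q, hq, rfl⟩ := hy
      exact hf q hq
    | zero => simp
    | add a b _ _ ha hb => rw [map_add]; exact add_mem ha hb
    | smul c a _ ha => rw [map_smul]; exact Submodule.smul_mem _ _ ha
  have hHmem : ∀ (X : Set T) (q : T), q ∈ X →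
      H₁ (v q) ∈ Submodule.span ℂ (v '' X) ∧ H₂ (v q) ∈ Submodule.span ℂ (v '' X) := by
    intro X q hq
    obtain ⟨h1, h2⟩ := (mem_V hV).mp (hv q)
    constructor
    · rw [h1]; exact Submodule.smul_mem _ _ (hVleW X q hq (hv q))
    · rw [h2]; exact Submodule.smul_mem _ _ (hVleW X q hq (hv q))
  have hYmem₁ : ∀ (X : Set T), (∀ i j, (h : V i j ≠ ⊥) → (⟨(i,j),h⟩ : T) ∈ X →
        ∀ (h' : V (i+1) j ≠ ⊥), (⟨(i+1,j),h'⟩ : T) ∈ X ∨ Submodule.map Y₁ (V i j) = ⊥) →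
      ∀ q ∈ X, Y₁ (v q) ∈ Submodule.span ℂ (v '' X) := by
    intro X hX q hq
    obtain ⟨⟨i, j⟩, hVq⟩ := q
    have hmem : Y₁ (v ⟨(i,j),hVq⟩) ∈ V (i+1) j :=
      mapY₁_le hH₂Y₁ hrel₁ hV i j (Submodule.mem_map.mpr
        ⟨_, show v ⟨(i,j),hVq⟩ ∈ V i j from hv ⟨(i,j),hVq⟩, rfl⟩)
    by_cases hb : V (i+1) j = ⊥
    · rw [hb] at hmem
      simp only [Submodule.mem_bot] at hmem
      rw [hmem]; exact Submodule.zero_mem _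
    · rcases hX i j hVq hq hb with hin | hzero
      · exact hVleW X _ hin hmem
      · have : Y₁ (v ⟨(i,j),hVq⟩) ∈ Submodule.map Y₁ (V i j) :=
          Submodule.mem_map.mpr ⟨_, show v ⟨(i,j),hVq⟩ ∈ V i j from hv ⟨(i,j),hVq⟩, rfl⟩
        rw [hzero] at this
        simp only [Submodule.mem_bot] at this
        rw [this]; exact Submodule.zero_mem _
  have hYmem₂ : ∀ (X : Set T), (∀ i j, (h : V i j ≠ ⊥) → (⟨(i,j),h⟩ : T) ∈ X →
        ∀ (h' : V i (j+1) ≠ ⊥), (⟨(i,j+1),h'⟩ : T) ∈ X ∨ Submodule.map Y₂ (V i j) = ⊥) →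
      ∀ q ∈ X, Y₂ (v q) ∈ Submodule.span ℂ (v '' X) := by
    intro X hX q hq
    obtain ⟨⟨i, j⟩, hVq⟩ := q
    have hmem : Y₂ (v ⟨(i,j),hVq⟩) ∈ V i (j+1) :=
      mapY₂_le hH₁Y₂ hrel₂ hV i j (Submodule.mem_map.mpr
        ⟨_, show v ⟨(i,j),hVq⟩ ∈ V i j from hv ⟨(i,j),hVq⟩, rfl⟩)
    by_cases hb : V i (j+1) = ⊥
    · rw [hb] at hmem
      simp only [Submodule.mem_bot] at hmem
      rw [hmem]; exact Submodule.zero_mem _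
    · rcases hX i j hVq hq hb with hin | hzero
      · exact hVleW X _ hin hmem
      · have : Y₂ (v ⟨(i,j),hVq⟩) ∈ Submodule.map Y₂ (V i j) :=
          Submodule.mem_map.mpr ⟨_, show v ⟨(i,j),hVq⟩ ∈ V i j from hv ⟨(i,j),hVq⟩, rfl⟩
        rw [hzero] at this
        simp only [Submodule.mem_bot] at this
        rw [this]; exact Submodule.zero_mem _
  refine ⟨W₁, W₂, ?_, ?_, ⟨?_, ?_⟩, ?_, ?_⟩
  · -- W₁ ≠ ⊥
    obtain ⟨p₁, hA₁', hVne₁⟩ := hne₁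
    refine (Submodule.ne_bot_iff _).mpr ⟨v ⟨p₁, hVne₁⟩, ?_, hv0 _⟩
    exact Submodule.subset_span ⟨⟨p₁, hVne₁⟩, hA₁', rfl⟩
  · obtain ⟨p₂, hA₂', hVne₂⟩ := hne₂
    refine (Submodule.ne_bot_iff _).mpr ⟨v ⟨p₂, hVne₂⟩, ?_, hv0 _⟩
    exact Submodule.subset_span ⟨⟨p₂, hVne₂⟩, hA₂', rfl⟩
  · -- disjoint
    exact hli.disjoint_span_image (Set.disjoint_left.mpr fun q hq hq2 => hq2 hq)
  · -- codisjoint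
    rw [codisjoint_iff]
    refine le_antisymm le_top ?_
    rw [← htop_V hHH hdiag₁ hdiag₂ hev₁ hev₂ hV]
    refine iSup_le fun p => ?_
    by_cases hb : V p.1 p.2 = ⊥
    · rw [hb]; exact bot_le
    · by_cases hA : A p.1 p.2
      · exact le_trans (hVleW X₁ ⟨p, hb⟩ hA) le_sup_left
      · exact le_trans (hVleW X₂ ⟨p, hb⟩ hA) le_sup_right
  · -- invariance W₁
    refine ⟨fun x hx => hinvgen X₁ H₁ (fun q hq => (hHmem X₁ q hq).1) x hx,
            fun x hx => hinvgen X₁ H₂ (fun q hq => (hHmem X₁ q hq).2) x hx,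
            fun x hx => hinvgen X₁ Y₁ (hYmem₁ X₁ ?_) x hx,
            fun x hx => hinvgen X₁ Y₂ (hYmem₂ X₁ ?_) x hx⟩
    · intro i j h hin h'
      exact Or.inl (hA₁ i j hin)
    · intro i j h hin h'
      exact Or.inl (hA₂ i j hin)
  · -- invariance W₂
    refine ⟨fun x hx => hinvgen X₂ H₁ (fun q hq => (hHmem X₂ q hq).1) x hx,
            fun x hx => hinvgen X₂ H₂ (fun q hq => (hHmem X₂ q hq).2) x hx,
            fun x hx => hinvgen X₂ Y₁ (hYmem₁ X₂ ?_) x hx,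
            fun x hx => hinvgen X₂ Y₂ (hYmem₂ X₂ ?_) x hx⟩
    · intro i j h hin h'
      by_cases hA : A (i+1) j
      · exact Or.inr (hc₁ i j hin hA)
      · exact Or.inl hA
    · intro i j h hin h'
      by_cases hA : A i (j+1)
      · exact Or.inr (hc₂ i j hin hA)
      · exact Or.inl hA


lemma backward
    (hHH : Commute H₁ H₂)
    (hdiag₁ : (⨆ μ : ℂ, Module.End.eigenspace H₁ μ) = ⊤)
    (hdiag₂ : (⨆ μ : ℂ, Module.End.eigenspace H₂ μ) = ⊤)
    (hev₁ : ∀ μ : ℂ, Module.End.HasEigenvalue H₁ μ ↔ ∃ i : ℕ, i ≤ s ∧ μ = (lam₁ : ℂ) - i)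
    (hev₂ : ∀ μ : ℂ, Module.End.HasEigenvalue H₂ μ ↔ ∃ j : ℕ, j ≤ t ∧ μ = (lam₂ : ℂ) - j)
    (hmf : ∀ a b : ℂ, Module.finrank ℂ
      ↥(Module.End.eigenspace H₁ a ⊓ Module.End.eigenspace H₂ b) ≤ 1)
    (hV : ∀ i j : ℕ, V i j =
      Module.End.eigenspace H₁ ((lam₁ : ℂ) - i) ⊓ Module.End.eigenspace H₂ ((lam₂ : ℂ) - j))
    (hP1 : ∀ i j₁ j j₂ : ℕ, V i j₁ ≠ ⊥ → V i j₂ ≠ ⊥ → j₁ ≤ j → j ≤ j₂ → V i j ≠ ⊥)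
    (hP3 : ∀ i : ℕ, i < s → ∃ j : ℕ, V i j ≠ ⊥ ∧ V (i + 1) j ≠ ⊥)
    (hP4a : ∀ i j : ℕ, V i j ≠ ⊥ → V (i + 1) j ≠ ⊥ → Submodule.map Y₁ (V i j) = V (i + 1) j)
    (hP4b : ∀ i j : ℕ, V i j ≠ ⊥ → V i (j + 1) ≠ ⊥ → Submodule.map Y₂ (V i j) = V i (j + 1))
    {W₁ W₂ : Submodule ℂ (Fin r → ℂ)} (hW₁ : W₁ ≠ ⊥) (hW₂ : W₂ ≠ ⊥)
    (hcompl : IsCompl W₁ W₂)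
    (hinv₁ : InvariantB2 H₁ H₂ Y₁ Y₂ W₁) (hinv₂ : InvariantB2 H₁ H₂ Y₁ Y₂ W₂) :
    False := by
  have hdisj : W₁ ⊓ W₂ = ⊥ := disjoint_iff.mp hcompl.disjoint
  have hsup : W₁ ⊔ W₂ = ⊤ := codisjoint_iff.mp hcompl.codisjoint
  have dich : ∀ i j, V i j ≠ ⊥ → V i j ≤ W₁ ∨ V i j ≤ W₂ := by
    intro i j hne
    obtain ⟨v, hv0, hsp⟩ := span_V hmf hV hne
    have hvm : v ∈ V i j := by rw [hsp]; exact Submodule.mem_span_singleton_self v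
    have hvtop : v ∈ W₁ ⊔ W₂ := by rw [hsup]; trivial
    obtain ⟨w₁, hw₁, w₂, hw₂, hw⟩ := Submodule.mem_sup.mp hvtop
    have key : ∀ (f : Module.End ℂ (Fin r → ℂ)) (μ : ℂ),
        (∀ x ∈ W₁, f x ∈ W₁) → (∀ x ∈ W₂, f x ∈ W₂) → f v = μ • v →
        f w₁ = μ • w₁ := by
      intro f μ hf₁ hf₂ hfv
      have h1 : f w₁ - μ • w₁ ∈ W₁ := sub_mem (hf₁ _ hw₁) (Submodule.smul_mem _ _ hw₁)
      have h2 : f w₁ - μ • w₁ ∈ W₂ := by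
        have hsum : (f w₁ - μ • w₁) + (f w₂ - μ • w₂) = 0 := by
          have hv2 : f (w₁ + w₂) = μ • (w₁ + w₂) := by rw [hw]; exact hfv
          rw [map_add, smul_add] at hv2
          rw [sub_add_sub_comm, hv2, sub_self]
        have heq : f w₁ - μ • w₁ = -(f w₂ - μ • w₂) := eq_neg_of_add_eq_zero_left hsum
        rw [heq]
        exact neg_mem (sub_mem (hf₂ _ hw₂) (Submodule.smul_mem _ _ hw₂))
      have hmem : f w₁ - μ • w₁ ∈ W₁ ⊓ W₂ := Submodule.mem_inf.mpr ⟨h1, h2⟩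
      rw [hdisj] at hmem
      simp only [Submodule.mem_bot] at hmem
      rw [← sub_eq_zero]
      exact hmem
    obtain ⟨hH1v, hH2v⟩ := (mem_V hV).mp hvm
    have hw₁V : w₁ ∈ V i j := (mem_V hV).mpr
      ⟨key H₁ _ hinv₁.1 hinv₂.1 hH1v, key H₂ _ hinv₁.2.1 hinv₂.2.1 hH2v⟩
    rw [hsp] at hw₁V
    obtain ⟨a, ha⟩ := Submodule.mem_span_singleton.mp hw₁V
    by_cases ha0 : a = 0
    · right
      have hw10 : w₁ = 0 := by rw [← ha, ha0, zero_smul]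
      have hvW₂ : v ∈ W₂ := by
        have : v = w₂ := by rw [← hw, hw10, zero_add]
        rw [this]; exact hw₂
      rw [hsp, Submodule.span_singleton_le_iff_mem]
      exact hvW₂
    · left
      have hvW₁ : v ∈ W₁ := by
        have : v = a⁻¹ • w₁ := by
          rw [← ha, smul_smul, inv_mul_cancel₀ ha0, one_smul]
        rw [this]
        exact Submodule.smul_mem _ _ hw₁
      rw [hsp, Submodule.span_singleton_le_iff_mem]
      exact hvW₁
  have notboth : ∀ i j, V i j ≠ ⊥ → V i j ≤ W₁ → V i j ≤ W₂ → False := by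
    intro i j hne hle₁ hle₂
    apply hne
    rw [eq_bot_iff, ← hdisj]
    exact le_inf hle₁ hle₂
  have exW₁ : ∃ p : ℕ × ℕ, V p.1 p.2 ≠ ⊥ ∧ V p.1 p.2 ≤ W₁ := by
    by_contra h
    push_neg at h
    have hle : (⨆ p : ℕ × ℕ, V p.1 p.2) ≤ W₂ := by
      refine iSup_le fun p => ?_
      by_cases hb : V p.1 p.2 = ⊥
      · rw [hb]; exact bot_le
      · rcases dich p.1 p.2 hb with h1 | h2
        · exact absurd h1 (h p hb)
        · exact h2
    rw [htop_V hHH hdiag₁ hdiag₂ hev₁ hev₂ hV] at hle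
    apply hW₁
    rw [eq_bot_iff, ← hdisj]
    exact le_inf le_rfl (le_trans le_top hle)
  have exW₂ : ∃ p : ℕ × ℕ, V p.1 p.2 ≠ ⊥ ∧ V p.1 p.2 ≤ W₂ := by
    by_contra h
    push_neg at h
    have hle : (⨆ p : ℕ × ℕ, V p.1 p.2) ≤ W₁ := by
      refine iSup_le fun p => ?_
      by_cases hb : V p.1 p.2 = ⊥
      · rw [hb]; exact bot_le
      · rcases dich p.1 p.2 hb with h1 | h2
        · exact h1
        · exact absurd h2 (h p hb)
    rw [htop_V hHH hdiag₁ hdiag₂ hev₁ hev₂ hV] at hle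
    apply hW₂
    rw [eq_bot_iff, ← hdisj]
    exact le_inf (le_trans le_top hle) le_rfl
  have stepH : ∀ i j, V i j ≠ ⊥ → V (i+1) j ≠ ⊥ → ((V i j ≤ W₁) ↔ (V (i+1) j ≤ W₁)) := by
    intro i j h h'
    have hmapeq := hP4a i j h h'
    constructor
    · intro hle
      rw [← hmapeq]
      intro x hx
      obtain ⟨y, hy, rfl⟩ := Submodule.mem_map.mp hx
      exact hinv₁.2.2.1 y (hle hy)
    · intro hle'
      by_contra hno
      rcases dich i j h with h1 | h2
      · exact hno h1
      · have hle2 : V (i+1) j ≤ W₂ := by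
          rw [← hmapeq]
          intro x hx
          obtain ⟨y, hy, rfl⟩ := Submodule.mem_map.mp hx
          exact hinv₂.2.2.1 y (h2 hy)
        exact notboth _ _ h' hle' hle2
  have stepV : ∀ i j, V i j ≠ ⊥ → V i (j+1) ≠ ⊥ → ((V i j ≤ W₁) ↔ (V i (j+1) ≤ W₁)) := by
    intro i j h h'
    have hmapeq := hP4b i j h h'
    constructor
    · intro hle
      rw [← hmapeq]
      intro x hx
      obtain ⟨y, hy, rfl⟩ := Submodule.mem_map.mp hx
      exact hinv₁.2.2.2 y (hle hy)
    · intro hle'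
      by_contra hno
      rcases dich i j h with h1 | h2
      · exact hno h1
      · have hle2 : V i (j+1) ≤ W₂ := by
          rw [← hmapeq]
          intro x hx
          obtain ⟨y, hy, rfl⟩ := Submodule.mem_map.mp hx
          exact hinv₂.2.2.2 y (h2 hy)
        exact notboth _ _ h' hle' hle2
  have samecol : ∀ i j j', j ≤ j' → V i j ≠ ⊥ → V i j' ≠ ⊥ → ((V i j ≤ W₁) ↔ (V i j' ≤ W₁)) := by
    intro i j j' hjj'
    induction j', hjj' using Nat.le_induction with
    | base => exact fun _ _ => Iff.rfl
    | succ j' hjj' ih =>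
      intro h h'
      have hmid : V i j' ≠ ⊥ := hP1 i j j' (j'+1) h h' hjj' (by omega)
      exact (ih h hmid).trans (stepV i j' hmid h')
  have samecol' : ∀ i j j', V i j ≠ ⊥ → V i j' ≠ ⊥ → ((V i j ≤ W₁) ↔ (V i j' ≤ W₁)) := by
    intro i j j' h h'
    rcases le_total j j' with hle | hle
    · exact samecol i j j' hle h h'
    · exact (samecol i j' j hle h' h).symm
  have cross : ∀ d i j j', V i j ≠ ⊥ → V (i+d) j' ≠ ⊥ →
      ((V i j ≤ W₁) ↔ (V (i+d) j' ≤ W₁)) := by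
    intro d
    induction d with
    | zero => exact fun i j j' h h' => samecol' i j j' h h'
    | succ d ih =>
      intro i j j' h h'
      have hbd : i + d + 1 ≤ s := bound₁ hev₁ hV h'
      obtain ⟨jm, hj1, hj2⟩ := hP3 (i+d) (by omega)
      exact ((ih i j jm h hj1).trans (stepH (i+d) jm hj1 hj2)).trans
        (samecol' (i+d+1) jm j' hj2 h')
  obtain ⟨⟨a, b⟩, hne_ab, hle_ab⟩ := exW₁
  obtain ⟨⟨c, d⟩, hne_cd, hle_cd⟩ := exW₂
  have hΦcd : ¬ (V c d ≤ W₁) := fun hcd => notboth c d hne_cd hcd hle_cd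
  rcases le_total a c with hac | hca
  · have hc2 : V (a + (c - a)) d ≠ ⊥ := by
      rw [show a + (c - a) = c from by omega]; exact hne_cd
    have hiff := cross (c - a) a b d hne_ab hc2
    rw [show a + (c - a) = c from by omega] at hiff
    exact hΦcd (hiff.mp hle_ab)
  · have hc2 : V (c + (a - c)) b ≠ ⊥ := by
      rw [show c + (a - c) = a from by omega]; exact hne_ab
    have hiff := cross (a - c) c d b hne_cd hc2
    rw [show c + (a - c) = a from by omega] at hiff
    exact hΦcd (hiff.mpr hle_ab)


end Rep

/-- A multiplicity-free representation of `𝔟²` with eigenvalue strings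
`λ₁, …, λ₁ − s` and `λ₂, …, λ₂ − t` is indecomposable iff conditions P1–P4 hold.
Here `V (i, j)` is the joint eigenspace for the joint eigenvalue `(λ₁ − i, λ₂ − j)` and
`(i,j) ∈ S` is encoded by `V (i, j) ≠ ⊥`. -/
theorem statement5 {r : ℕ} (H₁ H₂ Y₁ Y₂ : Module.End ℂ (Fin r → ℂ))
    (hHH : Commute H₁ H₂) (hYY : Commute Y₁ Y₂)
    (hH₁Y₂ : Commute H₁ Y₂) (hH₂Y₁ : Commute H₂ Y₁)
    (hrel₁ : H₁ * Y₁ - Y₁ * H₁ = -Y₁) (hrel₂ : H₂ * Y₂ - Y₂ * H₂ = -Y₂)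
    (hdiag₁ : (⨆ μ : ℂ, Module.End.eigenspace H₁ μ) = ⊤)
    (hdiag₂ : (⨆ μ : ℂ, Module.End.eigenspace H₂ μ) = ⊤)
    (hmf : ∀ a b : ℂ, Module.finrank ℂ
      ↥(Module.End.eigenspace H₁ a ⊓ Module.End.eigenspace H₂ b) ≤ 1)
    (lam₁ lam₂ : ℝ) (s t : ℕ)
    (hev₁ : ∀ μ : ℂ, Module.End.HasEigenvalue H₁ μ ↔ ∃ i : ℕ, i ≤ s ∧ μ = (lam₁ : ℂ) - i)
    (hev₂ : ∀ μ : ℂ, Module.End.HasEigenvalue H₂ μ ↔ ∃ j : ℕ, j ≤ t ∧ μ = (lam₂ : ℂ) - j)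
    (V : ℕ → ℕ → Submodule ℂ (Fin r → ℂ))
    (hV : ∀ i j : ℕ, V i j =
      Module.End.eigenspace H₁ ((lam₁ : ℂ) - i) ⊓ Module.End.eigenspace H₂ ((lam₂ : ℂ) - j)) :
    (¬ ∃ W₁ W₂ : Submodule ℂ (Fin r → ℂ), W₁ ≠ ⊥ ∧ W₂ ≠ ⊥ ∧ IsCompl W₁ W₂ ∧
        InvariantB2 H₁ H₂ Y₁ Y₂ W₁ ∧ InvariantB2 H₁ H₂ Y₁ Y₂ W₂) ↔
      ((∀ i j₁ j j₂ : ℕ, V i j₁ ≠ ⊥ → V i j₂ ≠ ⊥ → j₁ ≤ j → j ≤ j₂ → V i j ≠ ⊥) ∧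
       (∀ i₁ i i₂ j : ℕ, V i₁ j ≠ ⊥ → V i₂ j ≠ ⊥ → i₁ ≤ i → i ≤ i₂ → V i j ≠ ⊥) ∧
       (∀ i : ℕ, i < s → ∃ j : ℕ, V i j ≠ ⊥ ∧ V (i + 1) j ≠ ⊥) ∧
       ((∀ i j : ℕ, V i j ≠ ⊥ → V (i + 1) j ≠ ⊥ → Submodule.map Y₁ (V i j) = V (i + 1) j) ∧
        (∀ i j : ℕ, V i j ≠ ⊥ → V i (j + 1) ≠ ⊥ → Submodule.map Y₂ (V i j) = V i (j + 1)))) := by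
  have hsqp : ∀ i j, ((Submodule.map Y₁ (V i j) ≠ ⊥) ∧ (Submodule.map Y₂ (V (i+1) j) ≠ ⊥)) ↔
      ((Submodule.map Y₂ (V i j) ≠ ⊥) ∧ (Submodule.map Y₁ (V i (j+1)) ≠ ⊥)) :=
    sq_V hYY hH₂Y₁ hrel₁ hH₁Y₂ hrel₂ hmf hV
  have hbd1 : ∀ i j, Submodule.map Y₁ (V i j) ≠ ⊥ → i < s := by
    intro i j h
    have h' : V (i+1) j ≠ ⊥ := sub_ne_bot (mapY₁_le hH₂Y₁ hrel₁ hV i j) h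
    have := bound₁ hev₁ hV h'
    omega
  have hbd2 : ∀ i j, Submodule.map Y₂ (V i j) ≠ ⊥ → j < t := by
    intro i j h
    have h' : V i (j+1) ≠ ⊥ := sub_ne_bot (mapY₂_le hH₁Y₂ hrel₂ hV i j) h
    have := bound₂ hev₂ hV h'
    omega
  constructor
  · intro hno
    refine ⟨?_, ?_, ?_, ?_, ?_⟩
    · -- P1
      intro i j₁ j j₂ h1 h2 hj1 hj2
      by_contra hVb'
      have hVb : V i j = ⊥ := hVb'
      exfalso
      apply hno
      obtain ⟨g, hg0, hgmono, hginv, hgrange⟩ := wall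
        (fun a b => Submodule.map Y₂ (V b a) ≠ ⊥)
        (fun a b => Submodule.map Y₁ (V b a) ≠ ⊥) t
        (fun a b => (hsqp b a).symm) (fun a b h => hbd2 b a h) j i (by simp [hVb])
      refine decomp hH₂Y₁ hrel₁ hH₁Y₂ hrel₂ hHH hdiag₁ hdiag₂ hev₁ hev₂ hmf hV
        (fun a b => g a ≤ b) ?_ ?_ ?_ ?_ ?_ ?_
      · intro a b hab
        exact le_trans (hgmono a) hab
      · intro a b hab
        omega
      · intro a b hnab hab1
        exact not_not.mp (hgrange a b hab1 (by omega))
      · intro a b hnab hab1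
        rcases hginv a with h0 | hE
        · omega
        · rw [show g a - 1 = b from by omega] at hE
          exact not_not.mp hE
      · refine ⟨(i, j₂), ?_, h2⟩
        have hne : j ≠ j₂ := fun hc => h2 (hc ▸ hVb)
        show g i ≤ j₂
        omega
      · refine ⟨(i, j₁), ?_, h1⟩
        show ¬ (g i ≤ j₁)
        omega
    · -- P2
      intro i₁ i i₂ j h1 h2 hi1 hi2
      by_contra hVb'
      have hVb : V i j = ⊥ := hVb'
      exfalso
      apply hno
      obtain ⟨g, hg0, hgmono, hginv, hgrange⟩ := wall
        (fun a b => Submodule.map Y₁ (V a b) ≠ ⊥)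
        (fun a b => Submodule.map Y₂ (V a b) ≠ ⊥) s
        hsqp hbd1 i j (by simp [hVb])
      refine decomp hH₂Y₁ hrel₁ hH₁Y₂ hrel₂ hHH hdiag₁ hdiag₂ hev₁ hev₂ hmf hV
        (fun a b => g b ≤ a) ?_ ?_ ?_ ?_ ?_ ?_
      · intro a b hab
        omega
      · intro a b hab
        exact le_trans (hgmono b) hab
      · intro a b hnab hab1
        rcases hginv b with h0 | hE
        · omega
        · rw [show g b - 1 = a from by omega] at hE
          exact not_not.mp hE
      · intro a b hnab hab1
        exact not_not.mp (hgrange b a hab1 (by omega))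
      · refine ⟨(i₂, j), ?_, h2⟩
        have hne : i ≠ i₂ := fun hc => h2 (hc ▸ hVb)
        show g j ≤ i₂
        omega
      · refine ⟨(i₁, j), ?_, h1⟩
        show ¬ (g j ≤ i₁)
        omega
    · -- P3
      intro i hi
      by_contra hex
      apply hno
      refine decomp hH₂Y₁ hrel₁ hH₁Y₂ hrel₂ hHH hdiag₁ hdiag₂ hev₁ hev₂ hmf hV
        (fun a _ => i + 1 ≤ a) ?_ ?_ ?_ ?_ ?_ ?_
      · intro a b hab
        omega
      · intro a b hab
        exact hab
      · intro a b hnab hab1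
        have ha : a = i := by omega
        subst ha
        by_contra hmb
        apply hex
        refine ⟨b, ?_, sub_ne_bot (mapY₁_le hH₂Y₁ hrel₁ hV a b) hmb⟩
        intro hc
        exact hmb (by rw [hc, Submodule.map_bot])
      · intro a b hnab hab1
        exact absurd hab1 hnab
      · obtain ⟨j', hj'⟩ := colNonempty hHH hdiag₁ hdiag₂ hev₁ hev₂ hV (show i + 1 ≤ s from hi)
        exact ⟨(i+1, j'), le_rfl, hj'⟩
      · obtain ⟨j', hj'⟩ := colNonempty hHH hdiag₁ hdiag₂ hev₁ hev₂ hV (show i ≤ s from by omega)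
        refine ⟨(i, j'), ?_, hj'⟩
        show ¬ (i + 1 ≤ i)
        omega
    · -- P4a
      intro i j h h'
      by_contra hne'
      apply hno
      have hmb : Submodule.map Y₁ (V i j) = ⊥ := by
        by_contra hmb
        exact hne' (one_dim hmf hV (i+1) j _ (mapY₁_le hH₂Y₁ hrel₁ hV i j) hmb)
      obtain ⟨g, hg0, hgmono, hginv, hgrange⟩ := wall
        (fun a b => Submodule.map Y₁ (V a b) ≠ ⊥)
        (fun a b => Submodule.map Y₂ (V a b) ≠ ⊥) s
        hsqp hbd1 i j (fun hc => hc hmb)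
      refine decomp hH₂Y₁ hrel₁ hH₁Y₂ hrel₂ hHH hdiag₁ hdiag₂ hev₁ hev₂ hmf hV
        (fun a b => g b ≤ a) ?_ ?_ ?_ ?_ ?_ ?_
      · intro a b hab
        omega
      · intro a b hab
        exact le_trans (hgmono b) hab
      · intro a b hnab hab1
        rcases hginv b with h0 | hE
        · omega
        · rw [show g b - 1 = a from by omega] at hE
          exact not_not.mp hE
      · intro a b hnab hab1
        exact not_not.mp (hgrange b a hab1 (by omega))
      · refine ⟨(i+1, j), ?_, h'⟩
        show g j ≤ i + 1
        omega
      · refine ⟨(i, j), ?_, h⟩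
        show ¬ (g j ≤ i)
        omega
    · -- P4b
      intro i j h h'
      by_contra hne'
      apply hno
      have hmb : Submodule.map Y₂ (V i j) = ⊥ := by
        by_contra hmb
        exact hne' (one_dim hmf hV i (j+1) _ (mapY₂_le hH₁Y₂ hrel₂ hV i j) hmb)
      obtain ⟨g, hg0, hgmono, hginv, hgrange⟩ := wall
        (fun a b => Submodule.map Y₂ (V b a) ≠ ⊥)
        (fun a b => Submodule.map Y₁ (V b a) ≠ ⊥) t
        (fun a b => (hsqp b a).symm) (fun a b h => hbd2 b a h) j i (fun hc => hc hmb)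
      refine decomp hH₂Y₁ hrel₁ hH₁Y₂ hrel₂ hHH hdiag₁ hdiag₂ hev₁ hev₂ hmf hV
        (fun a b => g a ≤ b) ?_ ?_ ?_ ?_ ?_ ?_
      · intro a b hab
        exact le_trans (hgmono a) hab
      · intro a b hab
        omega
      · intro a b hnab hab1
        exact not_not.mp (hgrange a b hab1 (by omega))
      · intro a b hnab hab1
        rcases hginv a with h0 | hE
        · omega
        · rw [show g a - 1 = b from by omega] at hE
          exact not_not.mp hE
      · refine ⟨(i, j+1), ?_, h'⟩
        show g i ≤ j + 1
        omega
      · refine ⟨(i, j), ?_, h⟩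
        show ¬ (g i ≤ j)
        omega
  · rintro ⟨hP1, hP2, hP3, hP4a, hP4b⟩ ⟨W₁, W₂, h1, h2, hcompl, hi1, hi2⟩
    exact backward hHH hdiag₁ hdiag₂ hev₁ hev₂ hmf hV hP1 hP3 hP4a hP4b h1 h2 hcompl hi1 hi2
end

section
/- Let n ≥ 1 and let H₁,…,Hₙ, Y₁,…,Yₙ be an indecomposable representation of 𝔟ⁿ on ℂ², with each H_i diagonalizable. Then there exists an index i₀ ∈ {1,…,n} such that the pair (H_{i₀}, Y_{i₀}) is an indecomposable representation of 𝔟 on ℂ² (i.e., ℂ² is not the direct sum of two nonzero subspaces invariant under both H_{i₀} and Y_{i₀}), and for every j ≠ i₀ there is a scalar α_j ∈ ℂ with H_j = α_j·I₂ and Y_j = 0. -/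
section Helpers

section Helpers

variable {v w u : Fin 2 → ℂ} {T S : Module.End ℂ (Fin 2 → ℂ)} {μ ν σ : ℂ}

lemma aux_unique (hindep : LinearIndependent ℂ ![v, w]) {a b c d : ℂ}
    (h : a • v + b • w = c • v + d • w) : a = c ∧ b = d := by
  have h2 := (LinearIndependent.pair_iff.1 hindep) (a - c) (b - d) (by
    rw [sub_smul, sub_smul]; rw [← sub_eq_zero] at h; linear_combination (norm := module) h)
  exact ⟨sub_eq_zero.1 h2.1, sub_eq_zero.1 h2.2⟩

lemma aux_indep (hμν : μ ≠ ν) (hv : T v = μ • v) (hw : T w = ν • w)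
    (hv0 : v ≠ 0) (hw0 : w ≠ 0) : LinearIndependent ℂ ![v, w] := by
  rw [LinearIndependent.pair_iff]
  intro s t hst
  have h1 : s • (μ • v) + t • (ν • w) = 0 := by
    have := congrArg T hst
    simpa [map_add, hv, hw] using this
  have h2 : ((ν - μ) * t) • w = 0 := by
    have h3 := congrArg (fun x => x - μ • x) hst
    simp only [smul_zero, sub_zero] at h3
    calc ((ν - μ) * t) • w = (s • (μ • v) + t • (ν • w)) - μ • (s • v + t • w) := by module
    _ = 0 := by rw [h1, hst]; simp
  have ht : t = 0 := by
    rcases smul_eq_zero.1 h2 with h | h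
    · rcases mul_eq_zero.1 h with h' | h'
      · exact absurd (sub_eq_zero.1 h') (Ne.symm hμν)
      · exact h'
    · exact absurd h hw0
  subst ht
  simp only [zero_smul, add_zero] at hst
  rcases smul_eq_zero.1 hst with h | h
  · exact ⟨h, rfl⟩
  · exact absurd h hv0

lemma aux_span (hindep : LinearIndependent ℂ ![v, w]) :
    Submodule.span ℂ {v, w} = ⊤ := by
  have hcard : Fintype.card (Fin 2) = Module.finrank ℂ (Fin 2 → ℂ) := by simp
  have hs := (basisOfLinearIndependentOfCardEqFinrank hindep hcard).span_eq
  rw [coe_basisOfLinearIndependentOfCardEqFinrank] at hs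
  have : Set.range ![v, w] = {v, w} := by
    ext x; simp [Matrix.range_cons, Matrix.range_empty]; tauto
  rwa [this] at hs

lemma aux_diag (hindep : LinearIndependent ℂ ![v, w])
    (hspan : Submodule.span ℂ {v, w} = ⊤)
    (hμν : μ ≠ ν) (hv : T v = μ • v) (hw : T w = ν • w)
    (hcomm : Commute T S) : ∃ a : ℂ, S v = a • v := by
  obtain ⟨a, b, hab⟩ := Submodule.mem_span_pair.1
    (hspan ▸ Submodule.mem_top : S v ∈ Submodule.span ℂ {v, w})
  have hTS : T (S v) = μ • S v := by
    have h1 := LinearMap.congr_fun hcomm.eq v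
    simp only [Module.End.mul_apply] at h1
    rw [h1, hv, map_smul]
  rw [← hab] at hTS
  have h2 : a • (μ • v) + b • (ν • w) = (μ * a) • v + (μ * b) • w := by
    calc a • (μ • v) + b • (ν • w) = T (a • v + b • w) := by simp [map_add, hv, hw]
    _ = μ • (a • v + b • w) := hTS
    _ = (μ * a) • v + (μ * b) • w := by module
  have h3 : (a * μ) • v + (b * ν) • w = (μ * a) • v + (μ * b) • w := by
    rw [← h2]; module
  obtain ⟨_, hb⟩ := aux_unique hindep h3
  have hb0 : b = 0 := by
    have h4 : b * (ν - μ) = 0 := by linear_combination hb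
    rcases mul_eq_zero.1 h4 with h | h
    · exact h
    · exact absurd (sub_eq_zero.1 h) (Ne.symm hμν)
  refine ⟨a, ?_⟩
  rw [← hab, hb0]; simp

lemma aux_third (hindep : LinearIndependent ℂ ![v, w])
    (hspan : Submodule.span ℂ {v, w} = ⊤)
    (hσμ : σ ≠ μ) (hσν : σ ≠ ν) (hv : T v = μ • v) (hw : T w = ν • w)
    (hu : T u = σ • u) : u = 0 := by
  obtain ⟨a, b, hab⟩ := Submodule.mem_span_pair.1
    (hspan ▸ Submodule.mem_top : u ∈ Submodule.span ℂ {v, w})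
  rw [← hab] at hu
  have h2 : (a * μ) • v + (b * ν) • w = (σ * a) • v + (σ * b) • w := by
    calc (a * μ) • v + (b * ν) • w = T (a • v + b • w) := by
          simp [map_add, hv, hw]; module
    _ = σ • (a • v + b • w) := hu
    _ = (σ * a) • v + (σ * b) • w := by module
  obtain ⟨ha, hb⟩ := aux_unique hindep h2
  have ha0 : a = 0 := by
    have h4 : a * (μ - σ) = 0 := by linear_combination ha
    rcases mul_eq_zero.1 h4 with h | h
    · exact h
    · exact absurd (sub_eq_zero.1 h).symm hσμ
  have hb0 : b = 0 := by
    have h4 : b * (ν - σ) = 0 := by linear_combination hb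
    rcases mul_eq_zero.1 h4 with h | h
    · exact h
    · exact absurd (sub_eq_zero.1 h).symm hσν
  rw [← hab, ha0, hb0]; simp

lemma aux_ext (hspan : Submodule.span ℂ {v, w} = ⊤)
    (hv : S v = 0) (hw : S w = 0) : S = 0 := by
  apply LinearMap.ext
  intro x
  obtain ⟨a, b, hab⟩ := Submodule.mem_span_pair.1
    (hspan ▸ Submodule.mem_top : x ∈ Submodule.span ℂ {v, w})
  rw [← hab]
  simp [map_add, hv, hw]

lemma aux_isCompl (hindep : LinearIndependent ℂ ![v, w]) :
    IsCompl (Submodule.span ℂ {v}) (Submodule.span ℂ {w}) := by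
  constructor
  · rw [Submodule.disjoint_def]
    intro x hx1 hx2
    obtain ⟨a, ha⟩ := Submodule.mem_span_singleton.1 hx1
    obtain ⟨b, hb⟩ := Submodule.mem_span_singleton.1 hx2
    have h0 : a • v + (-b) • w = 0 := by rw [neg_smul, ha, hb, add_neg_cancel]
    obtain ⟨ha0, _⟩ := LinearIndependent.pair_iff.1 hindep a (-b) h0
    rw [← ha, ha0, zero_smul]
  · rw [codisjoint_iff, ← Submodule.span_insert]
    exact aux_span hindep
end Helpers

/-- A subspace invariant under both operators of a single pair `(T, S)`. -/
def InvariantPair {r : ℕ} (T S : Module.End ℂ (Fin r → ℂ))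
    (W : Submodule ℂ (Fin r → ℂ)) : Prop :=
  (∀ x ∈ W, T x ∈ W) ∧ (∀ x ∈ W, S x ∈ W)

/-- A two-dimensional indecomposable representation of `𝔟ⁿ`, with each
`H_i` diagonalizable, restricts to an indecomposable representation of `𝔟` at some index
`i₀`, and is scalar (resp. zero) at every other index. -/
theorem statement6 {n : ℕ} (hn : 1 ≤ n) (H Y : Fin n → Module.End ℂ (Fin 2 → ℂ))
    (hHH : ∀ i j, Commute (H i) (H j)) (hYY : ∀ i j, Commute (Y i) (Y j))
    (hHY : ∀ i j, i ≠ j → Commute (H i) (Y j))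
    (hrel : ∀ i, H i * Y i - Y i * H i = -(Y i))
    (hdiag : ∀ i, (⨆ μ : ℂ, Module.End.eigenspace (H i) μ) = ⊤)
    (hindec : ¬ ∃ W₁ W₂ : Submodule ℂ (Fin 2 → ℂ), W₁ ≠ ⊥ ∧ W₂ ≠ ⊥ ∧ IsCompl W₁ W₂ ∧
      (∀ i, InvariantPair (H i) (Y i) W₁) ∧ (∀ i, InvariantPair (H i) (Y i) W₂)) :
    ∃ i₀ : Fin n,
      (¬ ∃ W₁ W₂ : Submodule ℂ (Fin 2 → ℂ), W₁ ≠ ⊥ ∧ W₂ ≠ ⊥ ∧ IsCompl W₁ W₂ ∧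
        InvariantPair (H i₀) (Y i₀) W₁ ∧ InvariantPair (H i₀) (Y i₀) W₂) ∧
      ∀ j : Fin n, j ≠ i₀ →
        ∃ α : ℂ, H j = α • (1 : Module.End ℂ (Fin 2 → ℂ)) ∧ Y j = 0 := by
  classical
  have hscalarInv : ∀ T S' : Module.End ℂ (Fin 2 → ℂ), (∃ α : ℂ, T = α • 1 ∧ S' = 0) →
      ∀ W : Submodule ℂ (Fin 2 → ℂ), InvariantPair T S' W := by
    rintro T S' ⟨α, rfl, rfl⟩ W
    exact ⟨fun x hx => by simpa using W.smul_mem α hx, fun x _ => by simp⟩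
  by_cases hall : ∀ j, ∃ α : ℂ, H j = α • (1 : Module.End ℂ (Fin 2 → ℂ)) ∧ Y j = 0
  · exfalso
    apply hindec
    have hv0 : (![(1:ℂ), 0] : Fin 2 → ℂ) ≠ 0 := by
      intro h; have := congrFun h 0; simp at this
    have hw0 : (![(0:ℂ), 1] : Fin 2 → ℂ) ≠ 0 := by
      intro h; have := congrFun h 1; simp at this
    have hind : LinearIndependent ℂ ![![(1:ℂ), 0], ![(0:ℂ), 1]] := by
      rw [LinearIndependent.pair_iff]
      intro s t h
      constructor
      · have := congrFun h 0; simpa using this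
      · have := congrFun h 1; simpa using this
    exact ⟨Submodule.span ℂ {![(1:ℂ), 0]}, Submodule.span ℂ {![(0:ℂ), 1]},
      by simp [Submodule.span_singleton_eq_bot, hv0],
      by simp [Submodule.span_singleton_eq_bot, hw0],
      aux_isCompl hind, fun i => hscalarInv _ _ (hall i) _,
      fun i => hscalarInv _ _ (hall i) _⟩
  obtain ⟨i₀, hi₀⟩ := not_forall.1 hall
  by_cases hY0 : Y i₀ = 0
  · -- H i₀ is not scalar; its eigenlines decompose the whole representation: contradiction
    exfalso
    have hns : ∀ α : ℂ, H i₀ ≠ α • 1 := fun α hα => hi₀ ⟨α, hα, hY0⟩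
    have h1 : ∃ μ, Module.End.eigenspace (H i₀) μ ≠ ⊥ := by
      by_contra h
      push_neg at h
      have hbot : (⨆ μ : ℂ, Module.End.eigenspace (H i₀) μ) = ⊥ := by simp [h]
      rw [hdiag i₀] at hbot
      exact absurd hbot (by simp)
    obtain ⟨μ, hμ⟩ := h1
    obtain ⟨v, hvmem, hv0⟩ := Submodule.exists_mem_ne_zero_of_ne_bot hμ
    have hv : H i₀ v = μ • v := Module.End.mem_eigenspace_iff.1 hvmem
    have h2 : ∃ ν, ν ≠ μ ∧ Module.End.eigenspace (H i₀) ν ≠ ⊥ := by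
      by_contra h
      push_neg at h
      have hle : (⨆ ν : ℂ, Module.End.eigenspace (H i₀) ν) ≤
          Module.End.eigenspace (H i₀) μ := by
        apply iSup_le
        intro ν
        by_cases hν : ν = μ
        · subst hν; exact le_rfl
        · rw [h ν hν]; exact bot_le
      rw [hdiag i₀] at hle
      apply hns μ
      apply LinearMap.ext
      intro x
      have hx : H i₀ x = μ • x :=
        Module.End.mem_eigenspace_iff.1 (hle (Submodule.mem_top (x := x)))
      simpa using hx
    obtain ⟨ν, hνμ, hν⟩ := h2
    obtain ⟨w, hwmem, hw0⟩ := Submodule.exists_mem_ne_zero_of_ne_bot hν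
    have hw : H i₀ w = ν • w := Module.End.mem_eigenspace_iff.1 hwmem
    have hμν : μ ≠ ν := fun h => hνμ h.symm
    have hind := aux_indep hμν hv hw hv0 hw0
    have hspan := aux_span hind
    have hind2 := aux_indep hνμ hw hv hw0 hv0
    have hspan2 := aux_span hind2
    -- each eigenline is invariant under everything
    have lineInv : ∀ (u₁ u₂ : Fin 2 → ℂ) (σ₁ σ₂ : ℂ), σ₁ ≠ σ₂ →
        H i₀ u₁ = σ₁ • u₁ → H i₀ u₂ = σ₂ • u₂ →
        LinearIndependent ℂ ![u₁, u₂] → Submodule.span ℂ {u₁, u₂} = ⊤ →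
        ∀ i, InvariantPair (H i) (Y i) (Submodule.span ℂ {u₁}) := by
      intro u₁ u₂ σ₁ σ₂ hσ hu₁ hu₂ hi hs i
      constructor
      · intro x hx
        obtain ⟨a, rfl⟩ := Submodule.mem_span_singleton.1 hx
        obtain ⟨c, hc⟩ := aux_diag hi hs hσ hu₁ hu₂ (hHH i₀ i)
        rw [map_smul, hc]
        exact Submodule.smul_mem _ _ (Submodule.smul_mem _ _
          (Submodule.mem_span_singleton_self u₁))
      · intro x hx
        by_cases hii : i = i₀
        · subst hii; rw [hY0]; simp
        · obtain ⟨a, rfl⟩ := Submodule.mem_span_singleton.1 hx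
          obtain ⟨c, hc⟩ := aux_diag hi hs hσ hu₁ hu₂ (hHY i₀ i (Ne.symm hii))
          rw [map_smul, hc]
          exact Submodule.smul_mem _ _ (Submodule.smul_mem _ _
            (Submodule.mem_span_singleton_self u₁))
    exact hindec ⟨Submodule.span ℂ {v}, Submodule.span ℂ {w},
      by simp [Submodule.span_singleton_eq_bot, hv0],
      by simp [Submodule.span_singleton_eq_bot, hw0],
      aux_isCompl hind,
      lineInv v w μ ν hμν hv hw hind hspan,
      lineInv w v ν μ hνμ hw hv hind2 hspan2⟩
  · -- main case : Y i₀ ≠ 0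
    have h1 : ∃ μ, ∃ v ∈ Module.End.eigenspace (H i₀) μ, Y i₀ v ≠ 0 := by
      by_contra h
      push_neg at h
      apply hY0
      have hle : (⨆ μ : ℂ, Module.End.eigenspace (H i₀) μ) ≤ LinearMap.ker (Y i₀) :=
        iSup_le fun μ x hx => LinearMap.mem_ker.2 (h μ x hx)
      rw [hdiag i₀] at hle
      apply LinearMap.ext
      intro x
      simpa using LinearMap.mem_ker.1 (hle Submodule.mem_top)
    obtain ⟨μ, v, hvmem, hYv⟩ := h1
    have hv : H i₀ v = μ • v := Module.End.mem_eigenspace_iff.1 hvmem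
    set w := Y i₀ v with hwdef
    have hv0 : v ≠ 0 := fun h => hYv (by show Y i₀ v = 0; rw [h, map_zero])
    have hw0 : w ≠ 0 := hYv
    -- Y i₀ shifts eigenvalues down by one
    have hshift : ∀ (u : Fin 2 → ℂ) (σ : ℂ), H i₀ u = σ • u →
        H i₀ (Y i₀ u) = (σ - 1) • (Y i₀ u) := by
      intro u σ hu
      have h2 := LinearMap.congr_fun (hrel i₀) u
      simp only [LinearMap.sub_apply, Module.End.mul_apply, LinearMap.neg_apply] at h2
      have h3 : H i₀ (Y i₀ u) = -(Y i₀ u) + Y i₀ (H i₀ u) := sub_eq_iff_eq_add.1 h2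
      rw [h3, hu, map_smul]
      module
    have hw : H i₀ w = (μ - 1) • w := hshift v μ hv
    have hμν : μ ≠ μ - 1 := by
      intro h
      have h2 : (1 : ℂ) = 0 := by linear_combination h
      norm_num at h2
    have hind := aux_indep hμν hv hw hv0 hw0
    have hspan := aux_span hind
    have hYw : Y i₀ w = 0 := by
      have hw2 : H i₀ (Y i₀ w) = (μ - 1 - 1) • (Y i₀ w) := hshift w (μ - 1) hw
      refine aux_third hind hspan (σ := μ - 1 - 1) ?_ ?_ hv hw hw2
      · intro h
        have h2 : (2 : ℂ) = 0 := by linear_combination -h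
        norm_num at h2
      · intro h
        have h2 : (1 : ℂ) = 0 := by linear_combination -h
        norm_num at h2
    have key : ∀ j, j ≠ i₀ → ∃ α : ℂ, H j = α • (1 : Module.End ℂ (Fin 2 → ℂ)) ∧ Y j = 0 := by
      intro j hj
      obtain ⟨a, ha⟩ := aux_diag hind hspan hμν hv hw (hHH i₀ j)
      have haw : H j w = a • w := by
        have hc := LinearMap.congr_fun (hHY j i₀ hj).eq v
        simp only [Module.End.mul_apply] at hc
        rw [hwdef, hc, ha, map_smul]
      obtain ⟨c, hcv⟩ := aux_diag hind hspan hμν hv hw (hHY i₀ j (Ne.symm hj))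
      have hcw : Y j w = c • w := by
        have hc := LinearMap.congr_fun (hYY j i₀).eq v
        simp only [Module.End.mul_apply] at hc
        rw [hwdef, hc, hcv, map_smul]
      have hYj : Y j = c • (1 : Module.End ℂ (Fin 2 → ℂ)) := by
        have h4 := aux_ext hspan (S := Y j - c • (1 : Module.End ℂ (Fin 2 → ℂ)))
          (by simp [LinearMap.sub_apply, hcv]) (by simp [LinearMap.sub_apply, hcw])
        exact sub_eq_zero.1 h4
      have hY0j : Y j = 0 := by
        have h5 := hrel j
        rw [hYj] at h5
        have h6 : H j * (c • (1 : Module.End ℂ (Fin 2 → ℂ)))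
            - (c • (1 : Module.End ℂ (Fin 2 → ℂ))) * H j = 0 := by
          rw [mul_smul_comm, smul_mul_assoc, mul_one, one_mul, sub_self]
        rw [h6] at h5
        rw [hYj]
        exact neg_eq_zero.1 h5.symm
      have hHj : H j = a • (1 : Module.End ℂ (Fin 2 → ℂ)) := by
        have h4 := aux_ext hspan (S := H j - a • (1 : Module.End ℂ (Fin 2 → ℂ)))
          (by simp [LinearMap.sub_apply, ha]) (by simp [LinearMap.sub_apply, haw])
        exact sub_eq_zero.1 h4
      exact ⟨a, hHj, hY0j⟩
    refine ⟨i₀, ?_, key⟩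
    rintro ⟨W₁, W₂, hW1, hW2, hc, p1, p2⟩
    apply hindec
    refine ⟨W₁, W₂, hW1, hW2, hc, fun i => ?_, fun i => ?_⟩
    · by_cases hii : i = i₀
      · subst hii; exact p1
      · exact hscalarInv _ _ (key i hii) W₁
    · by_cases hii : i = i₀
      · subst hii; exact p2
      · exact hscalarInv _ _ (key i hii) W₂
end Helpers
end

section
/- Let 1 ≤ k ≤ n and let H₁,…,Hₙ, Y₁,…,Yₙ be a representation of 𝔟ⁿ on ℂ^r with each H_i diagonalizable. Suppose the restriction to the first k factors is multiplicity-free, i.e., every joint eigenspace {v ∈ ℂ^r : H_i v = θ_i v for 1 ≤ i ≤ k} is at most one-dimensional. Then the representation of 𝔟ⁿ is indecomposable if and only if the restricted representation of 𝔟^k given by H₁,…,H_k, Y₁,…,Y_k on ℂ^r is indecomposable (i.e., ℂ^r is not the direct sum of two nonzero subspaces invariant under H₁,…,H_k, Y₁,…,Y_k). -/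
/-- Decomposability of a representation of `𝔟ⁿ` relative to the set `s` of indices:
`ℂʳ` splits as a direct sum of two nonzero subspaces invariant under `H i, Y i` for all
`i ∈ s`. -/
def DecomposableOn {n r : ℕ} (H Y : Fin n → Module.End ℂ (Fin r → ℂ))
    (s : Set (Fin n)) : Prop :=
  ∃ W₁ W₂ : Submodule ℂ (Fin r → ℂ), W₁ ≠ ⊥ ∧ W₂ ≠ ⊥ ∧ IsCompl W₁ W₂ ∧
    (∀ i ∈ s, (∀ x ∈ W₁, H i x ∈ W₁) ∧ (∀ x ∈ W₁, Y i x ∈ W₁)) ∧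
    (∀ i ∈ s, (∀ x ∈ W₂, H i x ∈ W₂) ∧ (∀ x ∈ W₂, Y i x ∈ W₂))

/-- For a diagonalizable endomorphism, generalized eigenspaces coincide with eigenspaces. -/
lemma maxGen_eq_eigen {V : Type*} [AddCommGroup V] [Module ℂ V]
    (f : Module.End ℂ V) (h : ⨆ μ : ℂ, f.eigenspace μ = ⊤) (μ : ℂ) :
    f.maxGenEigenspace μ = f.eigenspace μ := by
  have hle : ∀ ν : ℂ, f.eigenspace ν ≤ f.maxGenEigenspace ν := fun ν =>
    (f.genEigenspace ν).monotone le_top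
  refine le_antisymm (fun m hm => ?_) (hle μ)
  have hmem : m ∈ f.eigenspace μ ⊔ ⨆ (ν : ℂ) (_ : ν ≠ μ), f.maxGenEigenspace ν := by
    have h1 : (⨆ ν : ℂ, f.eigenspace ν) ≤
        f.eigenspace μ ⊔ ⨆ (ν : ℂ) (_ : ν ≠ μ), f.maxGenEigenspace ν := by
      refine iSup_le fun ν => ?_
      rcases eq_or_ne ν μ with rfl | hν
      · exact le_sup_left
      · exact le_trans (le_trans (hle ν)
          (le_iSup₂ (f := fun (ν : ℂ) (_ : ν ≠ μ) => f.maxGenEigenspace ν) ν hν)) le_sup_right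
    exact h1 (h ▸ Submodule.mem_top)
  obtain ⟨a, ha, b, hb, hab⟩ := Submodule.mem_sup.mp hmem
  have hb' : b ∈ f.maxGenEigenspace μ := by
    have : b = m - a := by rw [← hab]; exact (add_sub_cancel_left a b).symm
    rw [this]
    exact sub_mem hm (hle μ ha)
  have hdisj : Disjoint (f.maxGenEigenspace μ)
      (⨆ (ν : ℂ) (_ : ν ≠ μ), f.maxGenEigenspace ν) := f.independent_maxGenEigenspace μ
  have hb0 : b = 0 := by
    have hmem' : b ∈ f.maxGenEigenspace μ ⊓ ⨆ (ν : ℂ) (_ : ν ≠ μ), f.maxGenEigenspace ν :=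
      Submodule.mem_inf.mpr ⟨hb', hb⟩
    rw [hdisj.eq_bot] at hmem'
    simpa using hmem'
  rw [← hab, hb0, add_zero]
  exact ha

/-- If the restriction of a representation of `𝔟ⁿ` to the first `k`
factors is multiplicity-free, then the full representation is indecomposable iff the
restricted representation of `𝔟ᵏ` is indecomposable. -/
theorem statement7 {n r k : ℕ} (hk1 : 1 ≤ k) (hkn : k ≤ n)
    (H Y : Fin n → Module.End ℂ (Fin r → ℂ))
    (hHH : ∀ i j, Commute (H i) (H j)) (hYY : ∀ i j, Commute (Y i) (Y j))
    (hHY : ∀ i j, i ≠ j → Commute (H i) (Y j))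
    (hrel : ∀ i, H i * Y i - Y i * H i = -(Y i))
    (hdiag : ∀ i, (⨆ μ : ℂ, Module.End.eigenspace (H i) μ) = ⊤)
    (hmf : ∀ θ : Fin n → ℂ, Module.finrank ℂ
      ↥(⨅ (i : Fin n) (_ : (i : ℕ) < k), Module.End.eigenspace (H i) (θ i)) ≤ 1) :
    (¬ DecomposableOn H Y Set.univ) ↔
      (¬ DecomposableOn H Y {i : Fin n | (i : ℕ) < k}) := by
  rw [not_iff_not]
  constructor
  · rintro ⟨W₁, W₂, h1, h2, hc, hi1, hi2⟩
    exact ⟨W₁, W₂, h1, h2, hc, fun i _ => hi1 i (Set.mem_univ i),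
      fun i _ => hi2 i (Set.mem_univ i)⟩
  · rintro ⟨W₁, W₂, h1, h2, hc, hi1, hi2⟩
    -- the index type for the first `k` factors
    set ι := {i : Fin n // (i : ℕ) < k} with hι
    -- joint eigenspaces
    set E : (ι → ℂ) → Submodule ℂ (Fin r → ℂ) :=
      fun χ => ⨅ i : ι, Module.End.eigenspace (H i.1) (χ i) with hE
    -- simultaneous diagonalization
    have hT : (⨆ χ : ι → ℂ, E χ) = ⊤ := by
      have := Module.End.iSup_iInf_maxGenEigenspace_eq_top_of_iSup_maxGenEigenspace_eq_top_of_commute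
        (K := ℂ) (fun i : ι => H i.1) (fun i j _ => hHH i.1 j.1)
        (fun i => by rw [funext fun μ => maxGen_eq_eigen (H i.1) (hdiag i.1) μ]; exact hdiag i.1)
      simpa only [hE, maxGen_eq_eigen (H _) (hdiag _)] using this
    -- the projection onto W₁ along W₂
    set P : Module.End ℂ (Fin r → ℂ) :=
      W₁.subtype ∘ₗ Submodule.projectionOnto W₁ W₂ hc with hP
    have hPmem : ∀ x, P x ∈ W₁ := fun x => (Submodule.projectionOnto W₁ W₂ hc x).2
    have hPleft : ∀ x ∈ W₁, P x = x := fun x hx => by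
      simp [hP, Submodule.projectionOnto_apply_left hc ⟨x, hx⟩]
    have hPright : ∀ x ∈ W₂, P x = 0 := fun x hx => by
      simp [hP, Submodule.projectionOnto_apply_right hc ⟨x, hx⟩]
    have hPzero : ∀ x, P x = 0 → x ∈ W₂ := fun x hx => by
      rw [← Submodule.ker_projectionOnto (h := hc)]
      have : (W₁.subtype) (Submodule.projectionOnto W₁ W₂ hc x) = 0 := hx
      exact LinearMap.mem_ker.mpr (Subtype.ext (by simpa using this))
    -- P commutes with any operator preserving W₁ and W₂
    have hcomm_of_inv : ∀ A : Module.End ℂ (Fin r → ℂ),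
        (∀ x ∈ W₁, A x ∈ W₁) → (∀ x ∈ W₂, A x ∈ W₂) → ∀ x, P (A x) = A (P x) := by
      intro A hA1 hA2 x
      obtain ⟨u, hu, w, hw, rfl⟩ := Submodule.mem_sup.mp
        (hc.sup_eq_top ▸ Submodule.mem_top (x := x))
      have hPuw : P (u + w) = u := by rw [map_add, hPleft u hu, hPright w hw, add_zero]
      rw [map_add A, map_add P, hPleft (A u) (hA1 u hu), hPright (A w) (hA2 w hw),
        add_zero, hPuw]
    -- P commutes with H j and Y j for j < k
    have hPH : ∀ j : ι, ∀ x, P (H j.1 x) = H j.1 (P x) := fun j =>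
      hcomm_of_inv (H j.1) (hi1 j.1 j.2).1 (hi2 j.1 j.2).1
    -- any operator commuting with all H j (j < k) commutes with P
    have key : ∀ A : Module.End ℂ (Fin r → ℂ),
        (∀ j : ι, ∀ x, H j.1 (A x) = A (H j.1 x)) → ∀ x, P (A x) = A (P x) := by
      intro A hA x
      have hx : x ∈ ⨆ χ : ι → ℂ, E χ := hT ▸ Submodule.mem_top
      refine Submodule.iSup_induction (motive := fun y => P (A y) = A (P y)) E hx ?_ (by simp) ?_
      · intro χ v hv
        rcases eq_or_ne v 0 with rfl | hv0
        · simp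
        · have hPv : P v ∈ E χ := by
            refine Submodule.mem_iInf _ |>.mpr fun i => ?_
            have hvi : H i.1 v = χ i • v :=
              Module.End.mem_eigenspace_iff.mp ((Submodule.mem_iInf _).mp hv i)
            exact Module.End.mem_eigenspace_iff.mpr (by rw [← hPH i, hvi, map_smul])
          have hAv : A v ∈ E χ := by
            refine Submodule.mem_iInf _ |>.mpr fun i => ?_
            have hvi : H i.1 v = χ i • v :=
              Module.End.mem_eigenspace_iff.mp ((Submodule.mem_iInf _).mp hv i)
            exact Module.End.mem_eigenspace_iff.mpr (by rw [hA i, hvi, map_smul])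
          -- E χ is at most one-dimensional
          have hfr : Module.finrank ℂ (E χ) ≤ 1 := by
            classical
            set θ : Fin n → ℂ := fun i => if h : (i : ℕ) < k then χ ⟨i, h⟩ else 0 with hθ
            have heq : (⨅ (i : Fin n) (_ : (i : ℕ) < k),
                Module.End.eigenspace (H i) (θ i)) = E χ := by
              apply le_antisymm
              · refine le_iInf fun i => le_trans (iInf_le _ i.1)
                  (le_trans (iInf_le _ i.2) (le_of_eq ?_))
                congr 1
                simp only [hθ]
                rw [dif_pos i.2]
              · refine le_iInf fun i => le_iInf fun hik =>
                  le_trans (iInf_le _ (⟨i, hik⟩ : ι)) (le_of_eq ?_)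
                congr 1
                simp only [hθ]
                rw [dif_pos hik]
            exact heq ▸ hmf θ
          have hspan : Submodule.span ℂ {v} = E χ := by
            refine Submodule.eq_of_le_of_finrank_le ?_ ?_
            · rw [Submodule.span_le, Set.singleton_subset_iff]; exact hv
            · rw [finrank_span_singleton hv0]; exact hfr
          obtain ⟨c, hcv⟩ := Submodule.mem_span_singleton.mp (hspan ▸ hPv)
          obtain ⟨a, hav⟩ := Submodule.mem_span_singleton.mp (hspan ▸ hAv)
          rw [← hav, ← hcv, map_smul, map_smul, ← hcv, ← hav, smul_comm]
      · intro x y hx hy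
        simp only [map_add, hx, hy]
    -- invariance from commutation with P
    have inv_of_comm : ∀ A : Module.End ℂ (Fin r → ℂ),
        (∀ x, P (A x) = A (P x)) → (∀ x ∈ W₁, A x ∈ W₁) ∧ (∀ x ∈ W₂, A x ∈ W₂) := by
      intro A hA
      constructor
      · intro x hx
        have : P (A x) = A x := by rw [hA, hPleft x hx]
        rw [← this]; exact hPmem _
      · intro x hx
        exact hPzero _ (by rw [hA, hPright x hx, map_zero])
    have hHinv : ∀ i : Fin n, (∀ x ∈ W₁, H i x ∈ W₁) ∧ (∀ x ∈ W₂, H i x ∈ W₂) := by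
      intro i
      exact inv_of_comm (H i) (key (H i) fun j x => by
        have := (hHH j.1 i).eq
        exact (LinearMap.congr_fun this x))
    have hYinv : ∀ i : Fin n, (∀ x ∈ W₁, Y i x ∈ W₁) ∧ (∀ x ∈ W₂, Y i x ∈ W₂) := by
      intro i
      by_cases hik : (i : ℕ) < k
      · exact ⟨(hi1 i hik).2, (hi2 i hik).2⟩
      · refine inv_of_comm (Y i) (key (Y i) fun j x => ?_)
        have hne : j.1 ≠ i := fun h => hik (h ▸ j.2)
        exact LinearMap.congr_fun (hHY j.1 i hne).eq x
    exact ⟨W₁, W₂, h1, h2, hc, fun i _ => ⟨fun x hx => (hHinv i).1 x hx, fun x hx => (hYinv i).1 x hx⟩,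
      fun i _ => ⟨fun x hx => (hHinv i).2 x hx, fun x hx => (hYinv i).2 x hx⟩⟩
end
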